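/- arXiv:math/0006137 — 7 statements merged into one kernel-verified Lean document; each statement's English description precedes it below -/
import Mathlib

section
/- Suppose (X,d_X) and (Y,d_Y) are compact metric spaces, and for each k ∈ ℕ, f_k : D_k → Y is an η-quasi-Möbius map defined on a subset D_k ⊆ X, where the Hausdorff distance dist_H(D_k, X) → 0 as k → ∞. Suppose there is δ > 0 and for each k triples (x¹_k, x²_k, x³_k) in D_k and (y¹_k, y²_k, y³_k) in Y with f_k(xⁱ_k) = yⁱ_k and d_X(xⁱ_k, xʲ_k) ≥ δ and d_Y(yⁱ_k, yʲ_k) ≥ δ for all i ≠ j. Then there is a quasi-Möbius map f : X → Y and a strictly increasing sequence (k_ν) such that sup_{x ∈ D_{k_ν}} d_Y(f_{k_ν}(x), f(x)) → 0 as ν → ∞. If in addition dist_H(f_k(D_k), Y) → 0 as k → ∞, then the limit f can be taken to be a quasi-Möbius homeomorphism of X onto Y. -/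
/-!
A normalization by separated triples makes the maps `f k` uniformly equicontinuous and uniformly
separating on `D k`: for `a, b ∈ D k`, two points of the triple lie far from `a`, and the
cross-ratio inequality for `a`, `b` and these two points bounds `dist (f a) (f b)` above by `η` of
a small cross-ratio when `a, b` are close, and below in terms of `η` of a bounded cross-ratio when
they are far apart. Precomposing `f k` with retractions of `X` onto `D k` that move points less and
less gives asymptotically equicontinuous maps on all of `X`, so an Arzelà–Ascoli argument yields a
uniformly convergent subsequence. The limit is injective by the uniform separation, `η`-quasi-Möbius
by passing to the limit in the cross-ratio inequality, and, when the images become dense, onto,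
its range being compact and dense.
-/

open Metric Set MeasureTheory Filter Topology

noncomputable section

/-- Cross-ratio of a four-tuple of points in a metric space. -/
def crossRatio {Z : Type*} [MetricSpace Z] (z₁ z₂ z₃ z₄ : Z) : NNReal :=
  nndist z₁ z₃ * nndist z₂ z₄ / (nndist z₁ z₄ * nndist z₂ z₃)

/-- `f : X → Y` is `η`-quasi-Möbius. -/
def IsQuasiMobius {X Y : Type*} [MetricSpace X] [MetricSpace Y]
    (η : NNReal ≃ₜ NNReal) (f : X → Y) : Prop :=
  Function.Injective f ∧
  ∀ x₁ x₂ x₃ x₄ : X, x₁ ≠ x₂ → x₁ ≠ x₃ → x₁ ≠ x₄ → x₂ ≠ x₃ → x₂ ≠ x₄ → x₃ ≠ x₄ →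
    crossRatio (f x₁) (f x₂) (f x₃) (f x₄) ≤ η (crossRatio x₁ x₂ x₃ x₄)

/-- `f : X → Y` is `η`-quasi-symmetric. -/
def IsQuasiSymmetric {X Y : Type*} [MetricSpace X] [MetricSpace Y]
    (η : NNReal ≃ₜ NNReal) (f : X → Y) : Prop :=
  Function.Injective f ∧
  ∀ x₁ x₂ x₃ : X, x₁ ≠ x₂ → x₁ ≠ x₃ → x₂ ≠ x₃ →
    nndist (f x₁) (f x₂) / nndist (f x₁) (f x₃) ≤ η (nndist x₁ x₂ / nndist x₁ x₃)

/-- Lebesgue covering dimension is at most `n`. -/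
def covDimLE (X : Type*) [TopologicalSpace X] (n : ℕ) : Prop :=
  ∀ 𝒰 : Set (Set X), (∀ U ∈ 𝒰, IsOpen U) → ⋃₀ 𝒰 = univ →
    ∃ 𝒱 : Set (Set X), (∀ V ∈ 𝒱, IsOpen V) ∧ ⋃₀ 𝒱 = univ ∧
      (∀ V ∈ 𝒱, ∃ U ∈ 𝒰, V ⊆ U) ∧
      ∀ x : X, {V ∈ 𝒱 | x ∈ V}.encard ≤ (n + 1 : ℕ)

/-- Lebesgue covering (topological) dimension. -/
noncomputable def topDim (X : Type*) [TopologicalSpace X] : ℕ∞ :=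
  ⨅ (n : ℕ) (_ : covDimLE X n), (n : ℕ∞)

/-- Ahlfors `Q`-regularity. -/
def AhlforsRegular (Q : ℝ) (Z : Type*) [MetricSpace Z] [MeasurableSpace Z] [BorelSpace Z] :
    Prop :=
  0 < Q ∧ CompleteSpace Z ∧ 0 < Metric.diam (univ : Set Z) ∧
  ∃ C : ℝ, 1 ≤ C ∧ ∀ (z : Z) (R : ℝ), 0 < R → R ≤ Metric.diam (univ : Set Z) →
    ENNReal.ofReal (R ^ Q / C) ≤ μH[Q] (Metric.ball z R) ∧
    μH[Q] (Metric.ball z R) ≤ ENNReal.ofReal (C * R ^ Q)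

/-- The action of `G` on `Z` is by homeomorphisms, each `η`-quasi-Möbius. -/
def QMAction (η : NNReal ≃ₜ NNReal) (G Z : Type*) [Group G] [MulAction G Z]
    [MetricSpace Z] : Prop :=
  (∀ g : G, Continuous fun z : Z => g • z) ∧
  ∀ g : G, IsQuasiMobius η (fun z : Z => g • z)

/-- Cocompactness of the induced action on distinct triples (for compact `Z`). -/
def TriplesCocompact (G Z : Type*) [Group G] [MulAction G Z] [MetricSpace Z] : Prop :=
  ∃ δ > (0:ℝ), ∀ z₁ z₂ z₃ : Z, z₁ ≠ z₂ → z₁ ≠ z₃ → z₂ ≠ z₃ →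
    ∃ g : G, δ ≤ dist (g • z₁) (g • z₂) ∧ δ ≤ dist (g • z₁) (g • z₃) ∧
      δ ≤ dist (g • z₂) (g • z₃)

def IsStableValue {X Y : Type*} [TopologicalSpace X] [MetricSpace Y]
    (f : X → Y) (y : Y) : Prop :=
  ∃ ε > (0:ℝ), ∀ g : X → Y, Continuous g → (∀ x, dist (f x) (g x) < ε) → y ∈ range g

def IsStableValueOn {X Y : Type*} [TopologicalSpace X] [MetricSpace Y]
    (f : X → Y) (s : Set X) (y : Y) : Prop :=
  IsStableValue (fun x : s => f x) y

def IsStablePoint {X Y : Type*} [TopologicalSpace X] [MetricSpace Y]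
    (f : X → Y) (x : X) : Prop :=
  ∀ U ∈ nhds x, IsStableValueOn f U (f x)

/-- `f` is a regular map. -/
def IsRegularMap {X Y : Type*} [MetricSpace X] [MetricSpace Y] (f : X → Y) : Prop :=
  (∃ L : NNReal, LipschitzWith L f) ∧
  ∃ N : ℕ, ∀ (y : Y) (r : ℝ), 0 < r → ∃ t : Finset X, t.card ≤ N ∧
    f ⁻¹' Metric.ball y r ⊆ ⋃ c ∈ t, Metric.ball c r

/-- A metric space is doubling. -/
def MetricDoubling (Y : Type*) [MetricSpace Y] : Prop :=
  ∃ M : ℕ, ∀ (y : Y) (R : ℝ), ∃ t : Finset Y, t.card ≤ M ∧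
    Metric.ball y R ⊆ ⋃ c ∈ t, Metric.ball c (R / 2)

/-- A metric space is uniformly perfect. -/
def UniformlyPerfect (Z : Type*) [MetricSpace Z] : Prop :=
  ∃ lam : ℝ, 1 ≤ lam ∧ ∀ (z : Z) (R : ℝ), 0 < R → R ≤ Metric.diam (univ : Set Z) →
    (Metric.closedBall z R \ Metric.ball z (R / lam)).Nonempty

/-- `(S, q)` is a weak tangent of `Z`: `S` is complete and some rescalings
`(λ_k Z, p_k)` converge to `(S, q)` in the pointed Gromov–Hausdorff sense. -/
def PointedWeakTangent (Z : Type*) [MetricSpace Z] (S : Type*) [MetricSpace S]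
    (q : S) : Prop :=
  CompleteSpace S ∧
  ∃ (lam : ℕ → ℝ) (p : ℕ → Z), (∀ k, 0 < lam k) ∧ Tendsto lam atTop atTop ∧
    ∀ R > (0:ℝ), ∀ ε > (0:ℝ), ∃ (N : ℕ) (M : Set S),
      q ∈ M ∧ M ⊆ Metric.ball q R ∧ (∀ s ∈ Metric.ball q R, ∃ m ∈ M, dist s m ≤ ε) ∧
      ∀ k ≥ N, ∃ (Mk : Set Z) (F : Z → S),
        p k ∈ Mk ∧ (∀ z ∈ Mk, lam k * dist z (p k) < R) ∧
        (∀ z : Z, lam k * dist z (p k) < R → ∃ w ∈ Mk, lam k * dist z w ≤ ε) ∧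
        F (p k) = q ∧ Set.BijOn F Mk M ∧
        ∀ a ∈ Mk, ∀ b ∈ Mk, |lam k * dist a b - dist (F a) (F b)| < ε

/-- `f` is `η`-quasi-Möbius on the subset `D`. -/
def IsQuasiMobiusOn {X Y : Type*} [MetricSpace X] [MetricSpace Y]
    (η : NNReal ≃ₜ NNReal) (f : X → Y) (D : Set X) : Prop :=
  Set.InjOn f D ∧
  ∀ x₁ ∈ D, ∀ x₂ ∈ D, ∀ x₃ ∈ D, ∀ x₄ ∈ D,
    x₁ ≠ x₂ → x₁ ≠ x₃ → x₁ ≠ x₄ → x₂ ≠ x₃ → x₂ ≠ x₄ → x₃ ≠ x₄ →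
      crossRatio (f x₁) (f x₂) (f x₃) (f x₄) ≤ η (crossRatio x₁ x₂ x₃ x₄)

open scoped NNReal

section CrossRatio

variable {Z : Type*} [MetricSpace Z]

lemma coe_crossRatio (z₁ z₂ z₃ z₄ : Z) :
    (crossRatio z₁ z₂ z₃ z₄ : ℝ) = dist z₁ z₃ * dist z₂ z₄ / (dist z₁ z₄ * dist z₂ z₃) := by
  simp only [crossRatio, NNReal.coe_div, NNReal.coe_mul, coe_nndist]

lemma crossRatio_le_toNNReal {z₁ z₂ z₃ z₄ : Z} {A B C E : ℝ} (hC : 0 < C) (hE : 0 < E)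
    (h₁₃ : dist z₁ z₃ ≤ A) (h₂₄ : dist z₂ z₄ ≤ B) (h₁₄ : C ≤ dist z₁ z₄)
    (h₂₃ : E ≤ dist z₂ z₃) :
    crossRatio z₁ z₂ z₃ z₄ ≤ (A * B / (C * E)).toNNReal := by
  have hA : 0 ≤ A := dist_nonneg.trans h₁₃
  have hB : 0 ≤ B := dist_nonneg.trans h₂₄
  rw [Real.le_toNNReal_iff_coe_le (by positivity), coe_crossRatio]
  gcongr

lemma Filter.Tendsto.crossRatio {ι : Type*} {l : Filter ι} {u₁ u₂ u₃ u₄ : ι → Z}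
    {z₁ z₂ z₃ z₄ : Z} (h₁ : Tendsto u₁ l (𝓝 z₁)) (h₂ : Tendsto u₂ l (𝓝 z₂))
    (h₃ : Tendsto u₃ l (𝓝 z₃)) (h₄ : Tendsto u₄ l (𝓝 z₄)) (h₁₄ : z₁ ≠ z₄) (h₂₃ : z₂ ≠ z₃) :
    Tendsto (fun i => _root_.crossRatio (u₁ i) (u₂ i) (u₃ i) (u₄ i)) l
      (𝓝 (_root_.crossRatio z₁ z₂ z₃ z₄)) :=
  ((h₁.nndist h₃).mul (h₂.nndist h₄)).div ((h₁.nndist h₄).mul (h₂.nndist h₃))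
    (mul_ne_zero (nndist_eq_zero.not.2 h₁₄) (nndist_eq_zero.not.2 h₂₃))

end CrossRatio

namespace NNReal

lemma strictMono_homeomorph (η : ℝ≥0 ≃ₜ ℝ≥0) : StrictMono η := by
  refine (η.continuous.strictMono_of_inj η.injective).resolve_right fun hanti => ?_
  obtain ⟨z, hz⟩ := η.surjective (η 0 + 1)
  have := hanti.antitone (zero_le : 0 ≤ z)
  rw [hz] at this
  exact absurd this (by simp)

lemma homeomorph_apply_zero (η : ℝ≥0 ≃ₜ ℝ≥0) : η 0 = 0 := by
  obtain ⟨z, hz⟩ := η.surjective 0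
  have := (strictMono_homeomorph η).monotone (zero_le : 0 ≤ z)
  rw [hz] at this
  exact le_antisymm this zero_le

lemma exists_pos_homeomorph_le (η : ℝ≥0 ≃ₜ ℝ≥0) {c : ℝ} (hc : 0 < c) :
    ∃ t > 0, (η t : ℝ) ≤ c := by
  have hη : ∀ᶠ s in 𝓝 0, η s < c.toNNReal :=
    η.continuous.continuousAt.eventually_lt continuousAt_const
      (by rwa [homeomorph_apply_zero, Real.toNNReal_pos])
  obtain ⟨t, hηt, ht⟩ := ((hη.filter_mono nhdsWithin_le_nhds).and
    (self_mem_nhdsWithin : Ioi (0 : ℝ≥0) ∈ 𝓝[>] 0)).exists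
  exact ⟨t, ht, (Real.lt_toNNReal_iff_coe_lt.1 hηt).le⟩

end NNReal

lemma exists_pos_dist_le (Z : Type*) [PseudoMetricSpace Z] [BoundedSpace Z] :
    ∃ C > 0, ∀ a b : Z, dist a b ≤ C := by
  obtain ⟨C, hC⟩ := Metric.boundedSpace_iff.1 ‹_›
  exact ⟨max C 1, by positivity, fun a b => (hC a b).trans (le_max_left _ _)⟩

lemma exists_ne_half_le_dist {Z : Type*} [PseudoMetricSpace Z] {δ : ℝ} {x : Fin 3 → Z}
    (hx : Pairwise fun i j => δ ≤ dist (x i) (x j)) (p : Z) :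
    ∃ i j, i ≠ j ∧ δ / 2 ≤ dist p (x i) ∧ δ / 2 ≤ dist p (x j) := by
  have far : ∀ i j, i ≠ j → dist p (x i) < δ / 2 → δ / 2 ≤ dist p (x j) := fun i j hij hi => by
    linarith [hx hij, dist_triangle_left (x i) (x j) p]
  by_cases h₀ : dist p (x 0) < δ / 2
  · exact ⟨1, 2, by decide, far 0 1 (by decide) h₀, far 0 2 (by decide) h₀⟩
  by_cases h₁ : dist p (x 1) < δ / 2
  · exact ⟨0, 2, by decide, not_lt.1 h₀, far 1 2 (by decide) h₁⟩
  exact ⟨0, 1, by decide, not_lt.1 h₀, not_lt.1 h₁⟩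

section QuasiMobius

variable {X Y : Type*} [MetricSpace X] [MetricSpace Y] {η : ℝ≥0 ≃ₜ ℝ≥0}

lemma IsQuasiMobiusOn.dist_mul_dist_le {f : X → Y} {D : Set X} (hf : IsQuasiMobiusOn η f D)
    {z₁ z₂ z₃ z₄ : X} (h₁ : z₁ ∈ D) (h₂ : z₂ ∈ D) (h₃ : z₃ ∈ D) (h₄ : z₄ ∈ D)
    (h₁₂ : z₁ ≠ z₂) (h₁₃ : z₁ ≠ z₃) (h₁₄ : z₁ ≠ z₄) (h₂₃ : z₂ ≠ z₃) (h₂₄ : z₂ ≠ z₄)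
    (h₃₄ : z₃ ≠ z₄) :
    dist (f z₁) (f z₃) * dist (f z₂) (f z₄) ≤
      η (crossRatio z₁ z₂ z₃ z₄) * (dist (f z₁) (f z₄) * dist (f z₂) (f z₃)) := by
  have hpos : 0 < dist (f z₁) (f z₄) * dist (f z₂) (f z₃) :=
    mul_pos (dist_pos.2 (hf.1.ne h₁ h₄ h₁₄)) (dist_pos.2 (hf.1.ne h₂ h₃ h₂₃))
  rw [← div_le_iff₀ hpos, ← coe_crossRatio, NNReal.coe_le_coe]
  exact hf.2 z₁ h₁ z₂ h₂ z₃ h₃ z₄ h₄ h₁₂ h₁₃ h₁₄ h₂₃ h₂₄ h₃₄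

variable (η) in
def IsNormalizedQuasiMobiusOn (δ : ℝ) (f : X → Y) (D : Set X) : Prop :=
  IsQuasiMobiusOn η f D ∧ ∃ x : Fin 3 → X, (∀ i, x i ∈ D) ∧
    (Pairwise fun i j => δ ≤ dist (x i) (x j)) ∧ Pairwise fun i j => δ ≤ dist (f (x i)) (f (x j))

variable [BoundedSpace X] [BoundedSpace Y] {ι : Type*} {δ : ℝ} {D : ι → Set X} {f : ι → X → Y}

theorem IsNormalizedQuasiMobiusOn.uniformEquicontinuous
    (hf : ∀ i, IsNormalizedQuasiMobiusOn η δ (f i) (D i)) (hδ : 0 < δ) :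
    ∀ ε > 0, ∃ ρ > 0, ∀ i, ∀ a ∈ D i, ∀ b ∈ D i, dist a b ≤ ρ → dist (f i a) (f i b) ≤ ε := by
  intro ε hε
  obtain ⟨CX, hCX, hXle⟩ := exists_pos_dist_le X
  obtain ⟨CY, hCY, hYle⟩ := exists_pos_dist_le Y
  obtain ⟨t, ht, hηt⟩ := NNReal.exists_pos_homeomorph_le η (c := ε * δ / CY ^ 2) (by positivity)
  have htR : (0 : ℝ) < t := ht
  refine ⟨min (δ / 4) (t * δ ^ 2 / (8 * CX)), by positivity, fun i a ha b hb hab => ?_⟩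
  obtain ⟨hqm, x, hxD, hx, hy⟩ := hf i
  rcases eq_or_ne a b with rfl | hab'
  · simpa using hε.le
  obtain ⟨j, k, hjk, haj, hak⟩ := exists_ne_half_le_dist hx a
  have hbj : δ / 4 ≤ dist (x j) b := by
    linarith [min_le_left (δ / 4) (t * δ ^ 2 / (8 * CX)), dist_triangle_right a (x j) b]
  have hbk : δ / 4 ≤ dist b (x k) := by
    linarith [min_le_left (δ / 4) (t * δ ^ 2 / (8 * CX)), dist_triangle a b (x k)]
  have hsrc : crossRatio a (x j) b (x k) ≤ t := by
    refine (crossRatio_le_toNNReal (by positivity) (by positivity) hab (hXle _ _) hak hbj).trans ?_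
    rw [Real.toNNReal_le_iff_le_coe, div_le_iff₀ (by positivity)]
    calc min (δ / 4) (t * δ ^ 2 / (8 * CX)) * CX ≤ t * δ ^ 2 / (8 * CX) * CX := by
          gcongr; exact min_le_right _ _
      _ = t * (δ / 2 * (δ / 4)) := by field_simp; ring
  have hqm' := hqm.dist_mul_dist_le ha (hxD j) hb (hxD k) (dist_pos.1 (by linarith))
    hab' (dist_pos.1 (by linarith)) (dist_pos.1 (by linarith)) (dist_pos.1 (by linarith [hx hjk]))
    (dist_pos.1 (by linarith))
  have hη : (η (crossRatio a (x j) b (x k)) : ℝ) ≤ ε * δ / CY ^ 2 :=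
    le_trans (NNReal.coe_le_coe.2 ((NNReal.strictMono_homeomorph η).monotone hsrc)) hηt
  have key : dist (f i a) (f i b) * δ ≤ ε * δ := calc
    dist (f i a) (f i b) * δ ≤ dist (f i a) (f i b) * dist (f i (x j)) (f i (x k)) := by
        gcongr; exact hy hjk
    _ ≤ η (crossRatio a (x j) b (x k)) * (dist (f i a) (f i (x k)) * dist (f i (x j)) (f i b)) :=
        hqm'
    _ ≤ ε * δ / CY ^ 2 * (CY * CY) := by gcongr <;> apply hYle
    _ = ε * δ := by field_simp
  exact le_of_mul_le_mul_right key hδ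

theorem IsNormalizedQuasiMobiusOn.uniformlySeparating
    (hf : ∀ i, IsNormalizedQuasiMobiusOn η δ (f i) (D i)) (hδ : 0 < δ) :
    ∀ r > 0, ∃ σ > 0, ∀ i, ∀ a ∈ D i, ∀ b ∈ D i, r ≤ dist a b → σ ≤ dist (f i a) (f i b) := by
  intro r hr
  obtain ⟨CX, hCX, hXle⟩ := exists_pos_dist_le X
  obtain ⟨CY, hCY, hYle⟩ := exists_pos_dist_le Y
  set M : ℝ≥0 := (CX * CX / (r * δ)).toNNReal
  have hM : (0 : ℝ) ≤ η M := (η M).2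
  refine ⟨min (δ / 4) (δ ^ 2 / (8 * CY * (η M + 1))), by positivity, fun i a ha b hb hab => ?_⟩
  obtain ⟨hqm, x, hxD, hx, hy⟩ := hf i
  rcases le_or_gt (δ / 4) (dist (f i a) (f i b)) with hfar | hnear
  · exact (min_le_left _ _).trans hfar
  obtain ⟨j, k, hjk, haj, hak⟩ := exists_ne_half_le_dist hy (f i a)
  have hbj : δ / 4 ≤ dist (f i (x j)) (f i b) := by
    linarith [dist_triangle_right (f i a) (f i (x j)) (f i b)]
  have hbk : δ / 4 ≤ dist (f i (x k)) (f i b) := by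
    linarith [dist_triangle_right (f i a) (f i (x k)) (f i b)]
  have hne : ∀ {u v : X}, 0 < dist (f i u) (f i v) → u ≠ v := fun h e => by simp [e] at h
  have hsrc : crossRatio a (x j) (x k) b ≤ M :=
    crossRatio_le_toNNReal hr hδ (hXle _ _) (hXle _ _) hab (hx hjk)
  have hqm' := hqm.dist_mul_dist_le ha (hxD j) (hxD k) hb (hne (by linarith)) (hne (by linarith))
    (dist_pos.1 (by linarith)) (dist_pos.1 (by linarith [hx hjk])) (hne (by linarith))
    (hne (by linarith))
  have hη : (η (crossRatio a (x j) (x k) b) : ℝ) ≤ η M :=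
    NNReal.coe_le_coe.2 ((NNReal.strictMono_homeomorph η).monotone hsrc)
  have key : δ ^ 2 / 8 ≤ (η M + 1) * CY * dist (f i a) (f i b) := calc
    δ ^ 2 / 8 = δ / 2 * (δ / 4) := by ring
    _ ≤ dist (f i a) (f i (x k)) * dist (f i (x j)) (f i b) := by gcongr
    _ ≤ η (crossRatio a (x j) (x k) b) * (dist (f i a) (f i b) * dist (f i (x j)) (f i (x k))) :=
        hqm'
    _ ≤ (η M + 1) * (dist (f i a) (f i b) * CY) := by gcongr; linarith; exact hYle _ _
    _ = (η M + 1) * CY * dist (f i a) (f i b) := by ring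
  refine (min_le_right _ _).trans ?_
  rw [div_le_iff₀ (by positivity)]
  linarith

end QuasiMobius

section AsymptoticEquicontinuity

variable {ι X Y : Type*} [MetricSpace X] [MetricSpace Y]

def AsymptoticallyEquicontinuous (g : ι → X → Y) (l : Filter ι) : Prop :=
  ∀ ε > 0, ∃ ρ > 0, ∀ᶠ i in l, ∀ a b, dist a b ≤ ρ → dist (g i a) (g i b) ≤ ε

lemma asymptoticallyEquicontinuous_comp {l : Filter ι} {D : ι → Set X} {f : ι → X → Y}
    (hf : ∀ ε > 0, ∃ ρ > 0, ∀ i, ∀ a ∈ D i, ∀ b ∈ D i, dist a b ≤ ρ → dist (f i a) (f i b) ≤ ε)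
    {p : ι → X → X} (hpD : ∀ i z, p i z ∈ D i) (hp : TendstoUniformly p id l) :
    AsymptoticallyEquicontinuous (fun i => f i ∘ p i) l := by
  intro ε hε
  obtain ⟨ρ, hρ, hf⟩ := hf ε hε
  refine ⟨ρ / 3, by positivity, ?_⟩
  filter_upwards [Metric.tendstoUniformly_iff.1 hp (ρ / 3) (by positivity)] with i hi a b hab
  simp only [id] at hi
  refine hf i _ (hpD i a) _ (hpD i b) ?_
  linarith [hi a, hi b, dist_triangle4 (p i a) a b (p i b), dist_comm (p i a) a]

lemma AsymptoticallyEquicontinuous.comp_tendsto {g : ι → X → Y} {l : Filter ι}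
    (hg : AsymptoticallyEquicontinuous g l) {κ : Type*} {φ : κ → ι} {l' : Filter κ}
    (hφ : Tendsto φ l' l) : AsymptoticallyEquicontinuous (fun k => g (φ k)) l' :=
  fun ε hε => (hg ε hε).imp fun _ ⟨hρ, h⟩ => ⟨hρ, hφ.eventually h⟩

lemma AsymptoticallyEquicontinuous.uniformContinuous_of_tendsto {g : ι → X → Y} {l : Filter ι}
    [l.NeBot] (hg : AsymptoticallyEquicontinuous g l) {F : X → Y}
    (hF : ∀ z, Tendsto (fun i => g i z) l (𝓝 (F z))) : UniformContinuous F := by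
  refine Metric.uniformContinuous_iff.2 fun ε hε => ?_
  obtain ⟨ρ, hρ, hg⟩ := hg (ε / 2) (by positivity)
  refine ⟨ρ, hρ, fun a b hab => ?_⟩
  have : dist (F a) (F b) ≤ ε / 2 :=
    le_of_tendsto ((hF a).dist (hF b)) (hg.mono fun i hi => hi a b hab.le)
  linarith

lemma AsymptoticallyEquicontinuous.uniformCauchySeqOn [CompactSpace X] {g : ℕ → X → Y}
    (hg : AsymptoticallyEquicontinuous g atTop) {S : ℕ → X} (hS : DenseRange S) {L : ℕ → Y}
    (hL : ∀ n, Tendsto (fun k => g k (S n)) atTop (𝓝 (L n))) :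
    UniformCauchySeqOn g atTop univ := by
  refine Metric.uniformCauchySeqOn_iff.2 fun ε hε => ?_
  obtain ⟨ρ, hρ, hequi⟩ := hg (ε / 4) (by positivity)
  obtain ⟨T, hT⟩ := isCompact_univ.elim_finite_subcover (fun n => ball (S n) ρ)
    (fun _ => isOpen_ball) fun z _ => mem_iUnion.2 (hS.exists_dist_lt z hρ)
  have hnear : ∀ᶠ k in atTop, ∀ n ∈ T, dist (g k (S n)) (L n) < ε / 8 :=
    (eventually_all_finset T).2 fun n _ => Metric.tendsto_nhds.1 (hL n) _ (by positivity)
  obtain ⟨N, hN⟩ := eventually_atTop.1 (hequi.and hnear)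
  refine ⟨N, fun m hm k hk z _ => ?_⟩
  obtain ⟨n, hnT, hzn⟩ := mem_iUnion₂.1 (hT (mem_univ z))
  have hzn : dist z (S n) ≤ ρ := (mem_ball.1 hzn).le
  linarith [(hN m hm).1 z (S n) hzn, (hN k hk).1 z (S n) hzn, (hN m hm).2 n hnT,
    (hN k hk).2 n hnT, dist_triangle4 (g m z) (g m (S n)) (L n) (g k z),
    dist_triangle (L n) (g k (S n)) (g k z), dist_comm (L n) (g k (S n)),
    dist_comm (g k (S n)) (g k z)]

theorem AsymptoticallyEquicontinuous.exists_tendstoUniformly_subseq [CompactSpace X] [Nonempty X]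
    [CompactSpace Y] {g : ℕ → X → Y} (hg : AsymptoticallyEquicontinuous g atTop) :
    ∃ (F : X → Y) (φ : ℕ → ℕ), StrictMono φ ∧ TendstoUniformly (fun ν => g (φ ν)) F atTop := by
  obtain ⟨S, hS⟩ := TopologicalSpace.exists_dense_seq X
  obtain ⟨L, φ, hφ, hL⟩ := SeqCompactSpace.tendsto_subseq fun k n => g k (S n)
  have hcauchy := (hg.comp_tendsto hφ.tendsto_atTop).uniformCauchySeqOn hS
    fun n => tendsto_pi_nhds.1 hL n
  choose F hF using fun z => cauchySeq_tendsto_of_complete (hcauchy.cauchySeq (mem_univ z))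
  exact ⟨F, φ, hφ,
    tendstoUniformlyOn_univ.1 (hcauchy.tendstoUniformlyOn_of_tendsto fun z _ => hF z)⟩

end AsymptoticEquicontinuity

section Limit

variable {ι X Y : Type*} [MetricSpace X] [MetricSpace Y] {l : Filter ι} [l.NeBot]
  {D : ι → Set X} {f : ι → X → Y} {p : ι → X → X} {F : X → Y}

lemma injective_of_tendsto_comp
    (hsep : ∀ r > 0, ∃ σ > 0, ∀ i, ∀ a ∈ D i, ∀ b ∈ D i, r ≤ dist a b → σ ≤ dist (f i a) (f i b))
    (hpD : ∀ i z, p i z ∈ D i) (hp : ∀ z, Tendsto (fun i => p i z) l (𝓝 z))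
    (hF : ∀ z, Tendsto (fun i => f i (p i z)) l (𝓝 (F z))) : Function.Injective F := by
  intro a b hab
  by_contra hne
  have hr : 0 < dist a b / 2 := half_pos (dist_pos.2 hne)
  obtain ⟨σ, hσ, hsep⟩ := hsep _ hr
  have hfar : ∀ᶠ i in l, dist a b / 2 ≤ dist (p i a) (p i b) :=
    ((hp a).dist (hp b)).eventually_const_le (half_lt_self (dist_pos.2 hne))
  have : σ ≤ dist (F a) (F b) := ge_of_tendsto ((hF a).dist (hF b))
    (hfar.mono fun i hi => hsep i _ (hpD i a) _ (hpD i b) hi)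
  rw [hab, dist_self] at this
  linarith

lemma isQuasiMobius_of_tendsto_comp {η : ℝ≥0 ≃ₜ ℝ≥0} (hqm : ∀ i, IsQuasiMobiusOn η (f i) (D i))
    (hpD : ∀ i z, p i z ∈ D i) (hp : ∀ z, Tendsto (fun i => p i z) l (𝓝 z))
    (hF : ∀ z, Tendsto (fun i => f i (p i z)) l (𝓝 (F z))) (hinj : Function.Injective F) :
    IsQuasiMobius η F := by
  refine ⟨hinj, fun z₁ z₂ z₃ z₄ h₁₂ h₁₃ h₁₄ h₂₃ h₂₄ h₃₄ => ?_⟩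
  have hne : ∀ {u v}, u ≠ v → ∀ᶠ i in l, p i u ≠ p i v := fun h =>
    (((hp _).dist (hp _)).eventually_ne (dist_ne_zero.2 h)).mono fun _ => dist_ne_zero.1
  refine le_of_tendsto_of_tendsto
    ((hF z₁).crossRatio (hF z₂) (hF z₃) (hF z₄) (hinj.ne h₁₄) (hinj.ne h₂₃))
    ((η.continuous.tendsto _).comp ((hp z₁).crossRatio (hp z₂) (hp z₃) (hp z₄) h₁₄ h₂₃)) ?_
  filter_upwards [hne h₁₂, hne h₁₃, hne h₁₄, hne h₂₃, hne h₂₄, hne h₃₄]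
    with i e₁₂ e₁₃ e₁₄ e₂₃ e₂₄ e₃₄
  exact (hqm i).2 _ (hpD i z₁) _ (hpD i z₂) _ (hpD i z₃) _ (hpD i z₄) e₁₂ e₁₃ e₁₄ e₂₃ e₂₄ e₃₄

end Limit

lemma denseRange_of_tendstoUniformly {ι X Y : Type*} [Nonempty X] [MetricSpace Y] [BoundedSpace Y]
    {l : Filter ι} [l.NeBot] {G : ι → X → Y} {F : X → Y} (hG : TendstoUniformly G F l)
    (himg : Tendsto (fun i => hausdorffDist (range (G i)) univ) l (𝓝 0)) : DenseRange F := by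
  refine Metric.denseRange_iff.2 fun y r hr => ?_
  obtain ⟨i, hi, hGi⟩ := ((himg.eventually_lt_const (half_pos hr)).and
    (Metric.tendstoUniformly_iff.1 hG (r / 2) (half_pos hr))).exists
  have hfin : hausdorffEDist univ (range (G i)) ≠ ⊤ := hausdorffEDist_ne_top_of_nonempty_of_bounded
    ⟨y, trivial⟩ (range_nonempty _) (.all _) (.all _)
  obtain ⟨_, ⟨z, rfl⟩, hz⟩ :=
    exists_dist_lt_of_hausdorffDist_lt (mem_univ y) (hausdorffDist_comm.trans_lt hi) hfin
  exact ⟨z, by linarith [dist_triangle y (G i z) (F z), hGi z, dist_comm (F z) (G i z)]⟩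

section Retraction

variable {X : Type*} [MetricSpace X] [BoundedSpace X]

lemma exists_retraction_dist_lt {D : Set X} (hD : D.Nonempty) {r : ℝ}
    (hr : hausdorffDist D univ < r) :
    ∃ p : X → X, (∀ z, p z ∈ D) ∧ (∀ z ∈ D, p z = z) ∧ ∀ z, dist z (p z) < r := by
  classical
  have hfin : hausdorffEDist univ D ≠ ⊤ :=
    hausdorffEDist_ne_top_of_nonempty_of_bounded (hD.mono (subset_univ _)) hD (.all _) (.all _)
  choose q hqD hq using fun z =>
    exists_dist_lt_of_hausdorffDist_lt (mem_univ z) (hausdorffDist_comm.trans_lt hr) hfin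
  have hr₀ : 0 < r := hausdorffDist_nonneg.trans_lt hr
  refine ⟨fun z => if z ∈ D then z else q z, fun z => ?_, fun z hz => if_pos hz, fun z => ?_⟩ <;>
    dsimp only <;> split_ifs with hz
  exacts [hz, hqD z, by simpa using hr₀, hq z]

lemma exists_retractions_tendstoUniformly_id {D : ℕ → Set X} (hD : ∀ k, (D k).Nonempty)
    (hdense : Tendsto (fun k => hausdorffDist (D k) univ) atTop (𝓝 0)) :
    ∃ p : ℕ → X → X, (∀ k z, p k z ∈ D k) ∧ (∀ k, ∀ z ∈ D k, p k z = z) ∧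
      TendstoUniformly p id atTop := by
  choose p hpD hpfix hp using fun k =>
    exists_retraction_dist_lt (hD k) (lt_add_of_pos_right _ (Nat.one_div_pos_of_nat (n := k)))
  refine ⟨p, hpD, hpfix, Metric.tendstoUniformly_iff.2 fun ε hε => ?_⟩
  have hr : Tendsto (fun k => hausdorffDist (D k) univ + 1 / ((k : ℝ) + 1)) atTop (𝓝 0) := by
    simpa using hdense.add tendsto_one_div_add_atTop_nhds_zero_nat
  filter_upwards [hr.eventually_lt_const hε] with k hk z using (hp k z).trans hk

end Retraction

/-- **Bonk–Kleiner, Lemma 2.1.** Uniformly quasi-Möbius maps defined on denser and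
denser subsets of a compact metric space `X`, mapping uniformly separated triples to
uniformly separated triples, subconverge uniformly to a quasi-Möbius map `f : X → Y`;
if moreover the images become dense in `Y`, the limit can be taken to be a
quasi-Möbius homeomorphism onto `Y`. -/
theorem qm_maps_on_dense_subsets_subconverge {X Y : Type*} [MetricSpace X] [MetricSpace Y]
    [CompactSpace X] [CompactSpace Y]
    (η : NNReal ≃ₜ NNReal) (D : ℕ → Set X) (f : ℕ → X → Y)
    (hqm : ∀ k, IsQuasiMobiusOn η (f k) (D k))
    (hdense : Tendsto (fun k => hausdorffDist (D k) (univ : Set X)) atTop (nhds 0))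
    (δ : ℝ) (hδ : 0 < δ) (x : ℕ → Fin 3 → X) (y : ℕ → Fin 3 → Y)
    (hxD : ∀ k i, x k i ∈ D k) (hfx : ∀ k i, f k (x k i) = y k i)
    (hsepx : ∀ k, ∀ i j : Fin 3, i ≠ j → δ ≤ dist (x k i) (x k j))
    (hsepy : ∀ k, ∀ i j : Fin 3, i ≠ j → δ ≤ dist (y k i) (y k j)) :
    (∃ (η' : NNReal ≃ₜ NNReal) (F : X → Y) (φ : ℕ → ℕ), StrictMono φ ∧
      IsQuasiMobius η' F ∧
      ∀ ε > (0:ℝ), ∃ N : ℕ, ∀ ν ≥ N, ∀ z ∈ D (φ ν), dist (f (φ ν) z) (F z) ≤ ε) ∧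
    (Tendsto (fun k => hausdorffDist (f k '' D k) (univ : Set Y)) atTop (nhds 0) →
      ∃ (η' : NNReal ≃ₜ NNReal) (F : X ≃ₜ Y) (φ : ℕ → ℕ), StrictMono φ ∧
        IsQuasiMobius η' F ∧
        ∀ ε > (0:ℝ), ∃ N : ℕ, ∀ ν ≥ N, ∀ z ∈ D (φ ν), dist (f (φ ν) z) (F z) ≤ ε) := by
  have : Nonempty X := ⟨x 0 0⟩
  have hnorm : ∀ k, IsNormalizedQuasiMobiusOn η δ (f k) (D k) := fun k =>
    ⟨hqm k, x k, hxD k, fun i j hij => hsepx k i j hij,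
      fun i j hij => by simpa only [hfx] using hsepy k i j hij⟩
  obtain ⟨p, hpD, hpfix, hp⟩ :=
    exists_retractions_tendstoUniformly_id (fun k => ⟨x k 0, hxD k 0⟩) hdense
  have hequi : AsymptoticallyEquicontinuous (fun k => f k ∘ p k) atTop :=
    asymptoticallyEquicontinuous_comp
      (IsNormalizedQuasiMobiusOn.uniformEquicontinuous hnorm hδ) hpD hp
  obtain ⟨F, φ, hφ, hFφ⟩ := hequi.exists_tendstoUniformly_subseq
  have hpφ : ∀ z, Tendsto (fun ν => p (φ ν) z) atTop (𝓝 z) :=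
    fun z => (hp.tendsto_at z).comp hφ.tendsto_atTop
  have hFcont : Continuous F :=
    ((hequi.comp_tendsto hφ.tendsto_atTop).uniformContinuous_of_tendsto hFφ.tendsto_at).continuous
  have hFinj : Function.Injective F := injective_of_tendsto_comp
    (IsNormalizedQuasiMobiusOn.uniformlySeparating (fun ν => hnorm (φ ν)) hδ)
    (fun ν => hpD (φ ν)) hpφ hFφ.tendsto_at
  have hFqm : IsQuasiMobius η F :=
    isQuasiMobius_of_tendsto_comp (fun ν => hqm (φ ν)) (fun ν => hpD (φ ν)) hpφ hFφ.tendsto_at hFinj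
  have hconv : ∀ ε > (0:ℝ), ∃ N : ℕ, ∀ ν ≥ N, ∀ z ∈ D (φ ν), dist (f (φ ν) z) (F z) ≤ ε := by
    intro ε hε
    obtain ⟨N, hN⟩ := eventually_atTop.1 (Metric.tendstoUniformly_iff.1 hFφ ε hε)
    refine ⟨N, fun ν hν z hz => ?_⟩
    simpa [dist_comm, hpfix _ z hz] using (hN ν hν z).le
  refine ⟨⟨η, F, φ, hφ, hFqm, hconv⟩, fun himg => ?_⟩
  have hrange : ∀ k, range (f k ∘ p k) = f k '' D k := fun k => by
    rw [range_comp, (range_subset_iff.2 (hpD k)).antisymm fun z hz => ⟨z, hpfix k z hz⟩]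
  have hsurj : Function.Surjective F := by
    rw [← range_eq_univ, ← (isCompact_range hFcont).isClosed.closure_eq]
    refine (denseRange_of_tendstoUniformly hFφ ?_).closure_range
    simp_rw [← hrange] at himg
    exact himg.comp hφ.tendsto_atTop
  exact ⟨η, Continuous.homeoOfEquivCompactToT2 (f := .ofBijective F ⟨hFinj, hsurj⟩) hFcont,
    φ, hφ, hFqm, hconv⟩
end
end

section
/- Suppose X is a metric space and f : X → ℝⁿ is a continuous map. Then (1) y ∈ ℝⁿ is a stable value of f if and only if y is a stable value of f restricted to f⁻¹(W) for every neighborhood W of y; and (2) if in addition X is compact and the fiber f⁻¹(y) is totally disconnected, then y is a stable value of f if and only if f⁻¹(y) contains a stable point of f. -/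
open Metric Set MeasureTheory Filter Topology

noncomputable section

/-!
A perturbation `g` of `f` on `f⁻¹(B(y, r))` is spliced into `f` as `f + φ(f) • (g - f)`, with `φ`
a bump equal to `1` near `y` and supported in `B(y, r)`; a small perturbation of `f` can only hit
`y` where `φ(f) = 1`, i.e. where it agrees with `g`. This localizes stability to `f⁻¹(W)`.

Conversely, if no point of the fibre `K = f⁻¹(y)` is stable, every point of `K` has an open
neighbourhood on which `y` is unstable. Perturbations avoiding `y` on two disjoint open sets glue
to one on their union, and total disconnectedness of the compact set `K` lets us repeat this over
a finite clopen partition, giving an open `V ⊇ K` on which `y` is unstable. As `f` is a closed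
map, `V` contains some `f⁻¹(W)`, so `y` is not a stable value of `f` either.
-/

theorem IsCompact.induction_on_of_isTotallyDisconnected {X : Type*} [TopologicalSpace X]
    [T2Space X] {K : Set X} (hK : IsCompact K) (hKd : IsTotallyDisconnected K) {p : Set X → Prop}
    (he : p ∅) (hmono : ∀ ⦃s t⦄, s ⊆ t → p t → p s)
    (hunion : ∀ ⦃s t⦄, IsCompact s → IsCompact t → Disjoint s t → p s → p t → p (s ∪ t))
    (hnhds : ∀ x ∈ K, ∃ U ∈ 𝓝 x, p U) : p K := by
  have : CompactSpace K := isCompact_iff_compactSpace.1 hK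
  have : TotallyDisconnectedSpace K := totallyDisconnectedSpace_subtype_iff.2 hKd
  have hcompact : ∀ C : Set K, IsClopen C → IsCompact (Subtype.val '' C : Set X) := fun C hC =>
    hC.isClosed.isCompact.image continuous_subtype_val
  suffices ∃ C : Set K, IsClopen C ∧ K ⊆ Subtype.val '' C ∧ p (Subtype.val '' C) by
    obtain ⟨C, -, hKC, hC⟩ := this
    exact hmono hKC hC
  refine hK.induction_on
    (p := fun s => ∃ C : Set K, IsClopen C ∧ s ⊆ Subtype.val '' C ∧ p (Subtype.val '' C))
    ⟨∅, isClopen_empty, empty_subset _, by rwa [image_empty]⟩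
    (fun s t hst ⟨C, hC, htC, hpC⟩ => ⟨C, hC, hst.trans htC, hpC⟩) ?_ ?_
  · rintro s t ⟨C, hC, hsC, hpC⟩ ⟨D, hD, htD, hpD⟩
    refine ⟨C ∪ D \ C, hC.union (hD.diff hC), ?_, ?_⟩
    · rw [union_sdiff_self, image_union]
      exact union_subset_union hsC htD
    · rw [image_union]
      exact hunion (hcompact C hC) (hcompact _ (hD.diff hC))
        (disjoint_image_of_injective Subtype.val_injective disjoint_sdiff_right) hpC
        (hmono (image_mono sdiff_subset) hpD)
  · intro x hx
    obtain ⟨U, hU, hpU⟩ := hnhds x hx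
    obtain ⟨O, hOU, hO, hxO⟩ := mem_nhds_iff.1 hU
    obtain ⟨C, hC, hxC, hCO⟩ := compact_exists_isClopen_in_isOpen
      (hO.preimage continuous_subtype_val) (show (⟨x, hx⟩ : K) ∈ Subtype.val ⁻¹' O from hxO)
    exact ⟨Subtype.val '' C, mem_nhds_subtype_iff_nhdsWithin.1 (hC.isOpen.mem_nhds hxC),
      C, hC, subset_rfl, hmono ((image_subset_iff.2 hCO).trans hOU) hpU⟩

section Stability

variable {X Y : Type*} [TopologicalSpace X] [MetricSpace Y] {f : X → Y} {s t : Set X} {y : Y}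

theorem isStableValueOn_iff :
    IsStableValueOn f s y ↔ ∃ ε > (0 : ℝ), ∀ g : X → Y, ContinuousOn g s →
      (∀ x ∈ s, dist (f x) (g x) < ε) → ∃ x ∈ s, g x = y := by
  unfold IsStableValueOn IsStableValue
  refine exists_congr fun ε => and_congr_right fun _ =>
    ⟨fun H g hg hgf => ?_, fun H g hg hgf => ?_⟩
  · obtain ⟨⟨x, hx⟩, rfl⟩ :=
      H (s.domRestrict g) (continuousOn_iff_continuous_domRestrict.1 hg) fun x => hgf x x.2
    exact ⟨x, hx, rfl⟩
  · set G := Function.extend Subtype.val g f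
    have hG : ∀ x : s, G x = g x := Subtype.val_injective.extend_apply g f
    obtain ⟨x, hx, rfl⟩ :=
      H G (continuousOn_iff_continuous_domRestrict.2 (hg.congr fun x => (hG x).symm))
        fun x hx => (hG ⟨x, hx⟩).symm ▸ hgf ⟨x, hx⟩
    exact ⟨⟨x, hx⟩, (hG ⟨x, hx⟩).symm⟩

theorem isStableValueOn_univ_iff : IsStableValueOn f univ y ↔ IsStableValue f y := by
  simp [isStableValueOn_iff, IsStableValue, continuousOn_univ]

theorem IsStableValueOn.mono (h : IsStableValueOn f s y) (hst : s ⊆ t) :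
    IsStableValueOn f t y := by
  rw [isStableValueOn_iff] at h ⊢
  obtain ⟨ε, hε, H⟩ := h
  refine ⟨ε, hε, fun g hg hgf => ?_⟩
  obtain ⟨x, hx, hgx⟩ := H g (hg.mono hst) fun x hx => hgf x (hst hx)
  exact ⟨x, hst hx, hgx⟩

theorem not_isStableValueOn_empty : ¬IsStableValueOn f ∅ y := fun ⟨_, _, H⟩ =>
  let ⟨x, _⟩ := H (fun _ => y) continuous_const fun x => x.2.elim
  x.2.elim

theorem isStableValueOn_union_iff {U V : Set X} (hU : IsOpen U) (hV : IsOpen V)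
    (hUV : Disjoint U V) :
    IsStableValueOn f (U ∪ V) y ↔ IsStableValueOn f U y ∨ IsStableValueOn f V y := by
  refine ⟨fun h => ?_, fun h => h.elim (·.mono subset_union_left) (·.mono subset_union_right)⟩
  rw [isStableValueOn_iff] at h
  obtain ⟨ε, hε, H⟩ := h
  have avoid : ∀ W, ¬IsStableValueOn f W y → ∃ g : X → Y, ContinuousOn g W ∧
      (∀ x ∈ W, dist (f x) (g x) < ε) ∧ ∀ x ∈ W, g x ≠ y := fun W hW => by
    rw [isStableValueOn_iff] at hW
    push Not at hW
    exact hW ε hε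
  classical
  by_contra! hUV'
  obtain ⟨gU, hgU, hgUf, hgUy⟩ := avoid U hUV'.1
  obtain ⟨gV, hgV, hgVf, hgVy⟩ := avoid V hUV'.2
  have hU_eq : EqOn (U.piecewise gU gV) gU U := piecewise_eqOn U gU gV
  have hV_eq : EqOn (U.piecewise gU gV) gV V := fun x hx =>
    piecewise_eq_of_notMem U gU gV (hUV.notMem_of_mem_right hx)
  obtain ⟨x, hx | hx, hgx⟩ := H (U.piecewise gU gV)
    ((hgU.congr hU_eq).union_of_isOpen (hgV.congr hV_eq) hU hV) <| by
      rintro x (hx | hx)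
      · exact hU_eq hx ▸ hgUf x hx
      · exact hV_eq hx ▸ hgVf x hx
  · exact hgUy x hx (hU_eq hx ▸ hgx)
  · exact hgVy x hx (hV_eq hx ▸ hgx)

theorem exists_isOpen_not_isStableValueOn_union [T2Space X] {A B : Set X} (hA : IsCompact A)
    (hB : IsCompact B) (hAB : Disjoint A B)
    (hA' : ∃ U, IsOpen U ∧ A ⊆ U ∧ ¬IsStableValueOn f U y)
    (hB' : ∃ V, IsOpen V ∧ B ⊆ V ∧ ¬IsStableValueOn f V y) :
    ∃ W, IsOpen W ∧ A ∪ B ⊆ W ∧ ¬IsStableValueOn f W y := by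
  obtain ⟨U, hU, hAU, hUs⟩ := hA'
  obtain ⟨V, hV, hBV, hVs⟩ := hB'
  obtain ⟨U', V', hU', hV', hAU', hBV', hUV'⟩ := SeparatedNhds.of_isCompact_isCompact hA hB hAB
  refine ⟨U ∩ U' ∪ V ∩ V', (hU.inter hU').union (hV.inter hV'),
    union_subset_union (subset_inter hAU hAU') (subset_inter hBV hBV'), ?_⟩
  rw [isStableValueOn_union_iff (hU.inter hU') (hV.inter hV')
    (hUV'.mono inter_subset_right inter_subset_right)]
  exact not_or.2
    ⟨fun h => hUs (h.mono inter_subset_left), fun h => hVs (h.mono inter_subset_left)⟩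

end Stability

section NormedSpace

variable {X E : Type*} [TopologicalSpace X] [NormedAddCommGroup E] [NormedSpace ℝ E]
  [HasContDiffBump E] {f : X → E} {y : E}

theorem exists_continuous_eqOn_of_continuousOn_preimage_ball (hf : Continuous f) {r ε : ℝ}
    (hr : 0 < r) (hε : 0 < ε) {g : X → E} (hg : ContinuousOn g (f ⁻¹' ball y r))
    (hgf : ∀ x ∈ f ⁻¹' ball y r, dist (f x) (g x) < ε) :
    ∃ G : X → E, Continuous G ∧ (∀ x, dist (f x) (G x) < ε) ∧
      EqOn G g (f ⁻¹' closedBall y (r / 3)) := by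
  let φ : ContDiffBump y := ⟨r / 3, r / 2, by positivity, by linarith⟩
  set h : X → E := fun x => φ (f x) • (g x - f x)
  have hsupp : tsupport h ⊆ f ⁻¹' ball y r :=
    (tsupport_smul_subset_left _ _).trans <| (tsupport_comp_subset_preimage φ hf).trans <|
      preimage_mono <| φ.tsupport_eq.trans_subset <|
        closedBall_subset_ball (by change r / 2 < r; linarith)
  have hh : Continuous h := ((φ.continuous.comp hf).continuousOn.smul (hg.sub hf.continuousOn))
    |>.continuous_of_tsupport_subset (isOpen_ball.preimage hf) hsupp
  refine ⟨f + h, hf.add hh, fun x => ?_, fun x hx => ?_⟩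
  · rw [Pi.add_apply, dist_self_add_right]
    by_cases hx : x ∈ f ⁻¹' ball y r
    · calc ‖h x‖ = φ (f x) * dist (f x) (g x) := by
            rw [norm_smul, Real.norm_of_nonneg φ.nonneg, dist_comm, dist_eq_norm]
        _ ≤ 1 * dist (f x) (g x) := mul_le_mul_of_nonneg_right φ.le_one dist_nonneg
        _ < ε := (one_mul _).trans_lt (hgf x hx)
    · rwa [image_eq_zero_of_notMem_tsupport fun h' => hx (hsupp h'), norm_zero]
  · simp [h, φ.one_of_mem_closedBall hx]

theorem IsStableValue.isStableValueOn_preimage (hf : Continuous f) (h : IsStableValue f y)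
    {W : Set E} (hW : W ∈ 𝓝 y) : IsStableValueOn f (f ⁻¹' W) y := by
  obtain ⟨r, hr, hrW⟩ := Metric.mem_nhds_iff.1 hW
  rw [← isStableValueOn_univ_iff, isStableValueOn_iff] at h
  obtain ⟨ε, hε, H⟩ := h
  refine IsStableValueOn.mono ?_ (preimage_mono hrW)
  rw [isStableValueOn_iff]
  refine ⟨min ε (r / 3), by positivity, fun g hg hgf => ?_⟩
  obtain ⟨G, hG, hGf, hGg⟩ :=
    exists_continuous_eqOn_of_continuousOn_preimage_ball hf hr (by positivity) hg hgf
  obtain ⟨x, -, hGx⟩ := H G hG.continuousOn fun x _ => (hGf x).trans_le (min_le_left _ _)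
  have hx : f x ∈ closedBall y (r / 3) := by
    rw [mem_closedBall, ← hGx]
    exact (hGf x).le.trans (min_le_right _ _)
  exact ⟨x, closedBall_subset_ball (by linarith) hx, (hGg hx).symm.trans hGx⟩

theorem IsStableValue.isStableValueOn_of_isClosedMap (hf : Continuous f) (hf' : IsClosedMap f)
    (h : IsStableValue f y) {V : Set X} (hV : IsOpen V) (hyV : f ⁻¹' {y} ⊆ V) :
    IsStableValueOn f V y := by
  have hW : (f '' Vᶜ)ᶜ ∈ 𝓝 y :=
    (hf' _ hV.isClosed_compl).isOpen_compl.mem_nhds fun ⟨x, hx, hxy⟩ => hx (hyV hxy)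
  exact (h.isStableValueOn_preimage hf hW).mono fun x hx =>
    not_not.1 fun hxV => hx ⟨x, hxV, rfl⟩

end NormedSpace

/-- **Bonk–Kleiner, Lemma 3.6.** A value `y` of a continuous map `f : X → ℝⁿ` is
stable iff it is a stable value of the restriction of `f` to `f⁻¹(W)` for every
neighborhood `W` of `y`; and if `X` is compact and `f⁻¹(y)` is totally disconnected,
then `y` is a stable value iff the fiber `f⁻¹(y)` contains a stable point. -/
theorem stable_value_localization {X : Type*} [MetricSpace X] (n : ℕ)
    (f : X → EuclideanSpace ℝ (Fin n)) (hf : Continuous f)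
    (y : EuclideanSpace ℝ (Fin n)) :
    (IsStableValue f y ↔ ∀ W ∈ nhds y, IsStableValueOn f (f ⁻¹' W) y) ∧
    (CompactSpace X → IsTotallyDisconnected (f ⁻¹' {y}) →
      (IsStableValue f y ↔ ∃ x, f x = y ∧ IsStablePoint f x)) := by
  refine ⟨⟨fun h W hW => h.isStableValueOn_preimage hf hW, fun h => ?_⟩,
    fun _ hKd => ⟨fun h => ?_, ?_⟩⟩
  · simpa [isStableValueOn_univ_iff] using h univ univ_mem
  · by_contra! hno
    have hlocal :
        ∀ x ∈ f ⁻¹' {y}, ∃ U ∈ 𝓝 x, ∃ V, IsOpen V ∧ U ⊆ V ∧ ¬IsStableValueOn f V y := by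
      intro x (hx : f x = y)
      obtain ⟨U, hU, hUs⟩ : ∃ U ∈ 𝓝 x, ¬IsStableValueOn f U y := by
        simpa [IsStablePoint, hx] using hno x hx
      exact ⟨interior U, interior_mem_nhds.2 hU, interior U, isOpen_interior, subset_rfl,
        fun h => hUs (h.mono interior_subset)⟩
    obtain ⟨V, hV, hKV, hVs⟩ := (isClosed_singleton.preimage hf).isCompact
      |>.induction_on_of_isTotallyDisconnected hKd
        (p := fun s => ∃ V, IsOpen V ∧ s ⊆ V ∧ ¬IsStableValueOn f V y)
        ⟨∅, isOpen_empty, subset_rfl, not_isStableValueOn_empty⟩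
        (fun s t hst ⟨V, hV, htV, hVs⟩ => ⟨V, hV, hst.trans htV, hVs⟩)
        (fun s t hs ht hst => exists_isOpen_not_isStableValueOn_union hs ht hst) hlocal
    exact hVs (h.isStableValueOn_of_isClosedMap hf hf.isClosedMap hV hKV)
  · rintro ⟨x, rfl, hx⟩
    simpa [isStableValueOn_univ_iff] using hx univ univ_mem
end
end

section
/- Let X be a compact metric space such that every nonempty open subset of X has topological dimension at least n, and let f : X → ℝⁿ be a continuous map of bounded multiplicity. Then for every y ∈ ℝⁿ and every ε > 0 there is δ > 0 such that for every y' ∈ B(y, δ) and every stable point x ∈ f⁻¹(y), there is a stable point of f in f⁻¹(y') ∩ B(x, ε). -/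
open Metric Set MeasureTheory Filter Topology

noncomputable section

lemma stableValueOn_mono {X Y : Type*} [TopologicalSpace X] [MetricSpace Y]
    {f : X → Y} {W V : Set X} (hWV : W ⊆ V) {y : Y}
    (h : IsStableValueOn f W y) : IsStableValueOn f V y := by
  obtain ⟨e, he, hP⟩ := h
  refine ⟨e, he, fun g hg hgd => ?_⟩
  obtain ⟨w, hw⟩ := hP (fun w : W => g (Set.inclusion hWV w))
    (hg.comp (continuous_inclusion hWV)) (fun w => hgd (Set.inclusion hWV w))
  exact ⟨Set.inclusion hWV w, hw⟩

lemma stableValue_shift {Z : Type*} [TopologicalSpace Z] {n : ℕ}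
    {f : Z → EuclideanSpace ℝ (Fin n)} {y y' : EuclideanSpace ℝ (Fin n)} {e : ℝ}
    (he : 0 < e) (hP : ∀ g : Z → EuclideanSpace ℝ (Fin n), Continuous g →
      (∀ z, dist (f z) (g z) < e) → y ∈ range g)
    (hy' : dist y' y < e) : IsStableValue f y' := by
  refine ⟨e - dist y' y, by linarith, fun g hg hgd => ?_⟩
  have := hP (fun z => g z + (y - y')) (hg.add continuous_const) (fun z => ?_)
  · obtain ⟨z, hz⟩ := this
    refine ⟨z, ?_⟩
    have h2 : g z + (y - y') = y := hz
    have : g z = y' := by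
      have h3 : g z = y - (y - y') := eq_sub_of_add_eq h2
      rw [h3]; abel
    exact this
  · calc dist (f z) (g z + (y - y')) ≤ dist (f z) (g z) + dist (g z) (g z + (y - y')) :=
        dist_triangle _ _ _
    _ < (e - dist y' y) + dist (g z) (g z + (y - y')) := by linarith [hgd z]
    _ = (e - dist y' y) + dist y' y := by
        rw [dist_eq_norm]
        simp [dist_eq_norm]
    _ = e := by ring

lemma stable_value_exists_stable_point {X : Type*} [MetricSpace X] [CompactSpace X] {n N : ℕ}
    {f : X → EuclideanSpace ℝ (Fin n)} (hf : Continuous f)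
    (hmult : ∀ y, (f ⁻¹' {y}).encard ≤ N)
    {U : Set X} (hU : IsOpen U) {y : EuclideanSpace ℝ (Fin n)}
    (hy : IsStableValueOn f U y) :
    ∃ x ∈ U, f x = y ∧ IsStablePoint f x := by
  classical
  by_contra hcon
  push_neg at hcon
  obtain ⟨ε₀, hε₀, hstab⟩ := hy
  set S : Set X := f ⁻¹' {y} ∩ U with hSdef
  have hSfin : S.Finite := by
    have h1 : (f ⁻¹' {y}).Finite := by
      rw [← Set.encard_lt_top_iff]
      exact lt_of_le_of_lt (hmult y) (WithTop.coe_lt_top N)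
    exact h1.subset inter_subset_left
  have hSne : S.Nonempty := by
    obtain ⟨u, hu⟩ := hstab (fun u : U => f u) (hf.comp continuous_subtype_val)
      (fun u => by simpa using hε₀)
    exact ⟨u.1, by simpa using hu, u.2⟩
  have H1 : ∀ s ∈ S, ∃ V ∈ nhds s, ¬ IsStableValueOn f V y := by
    intro s hs
    have hfs : f s = y := hs.1
    have hns := hcon s hs.2 hfs
    rw [IsStablePoint] at hns; push_neg at hns
    obtain ⟨V, hV, hVns⟩ := hns
    exact ⟨V, hV, by rwa [hfs] at hVns⟩
  choose! V hVmem hVns using H1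
  have H2 : ∀ s ∈ S, ∃ r : ℝ, 0 < r ∧ closedBall s r ⊆ V s ∩ U ∧
      ∀ t ∈ S, t ≠ s → 2 * r < dist s t := by
    intro s hs
    have h1 : V s ∩ U ∈ nhds s := inter_mem (hVmem s hs) (hU.mem_nhds hs.2)
    obtain ⟨r1, hr1, hball1⟩ := Metric.mem_nhds_iff.mp h1
    have h2 : (S \ {s})ᶜ ∈ nhds s :=
      ((hSfin.subset diff_subset).isClosed.isOpen_compl).mem_nhds (by simp)
    obtain ⟨r0, hr0, hball0⟩ := Metric.mem_nhds_iff.mp h2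
    refine ⟨min (r1/2) (r0/3), by positivity, ?_, ?_⟩
    · refine (closedBall_subset_ball ?_).trans hball1
      calc min (r1/2) (r0/3) ≤ r1/2 := min_le_left _ _
        _ < r1 := by linarith
    · intro t ht hts
      have htb : t ∉ ball s r0 := fun h => (hball0 h) ⟨ht, hts⟩
      have hd : r0 ≤ dist t s := by simpa [not_lt] using htb
      rw [dist_comm] at hd
      calc 2 * min (r1/2) (r0/3) ≤ 2 * (r0/3) := by
            have := min_le_right (r1/2) (r0/3); linarith
        _ < r0 := by linarith
        _ ≤ dist s t := hd
  choose! r hr0 hrsub hrsep using H2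
  have H3 : ∀ s ∈ S, ∃ c : ℝ, 0 < c ∧
      ∀ z ∈ closedBall s (r s) \ ball s (r s / 2), c ≤ dist (f z) y := by
    intro s hs
    set A := closedBall s (r s) \ ball s (r s / 2) with hA
    rcases A.eq_empty_or_nonempty with hAe | hAne
    · exact ⟨1, one_pos, by simp [hAe]⟩
    · have hAcl : IsClosed A := by
        rw [hA, diff_eq]
        exact Metric.isClosed_closedBall.inter isOpen_ball.isClosed_compl
      have hAc : IsCompact A := hAcl.isCompact
      obtain ⟨z0, hz0, hmin⟩ := hAc.exists_isMinOn hAne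
        ((hf.dist continuous_const).continuousOn)
      refine ⟨dist (f z0) y, ?_, fun z hz => isMinOn_iff.mp hmin z hz⟩
      rw [dist_pos]
      intro hfz
      have hz0U : z0 ∈ U := (hrsub s hs hz0.1).2
      have hz0S : z0 ∈ S := ⟨hfz, hz0U⟩
      have hne : z0 ≠ s := by
        intro h; subst h
        exact hz0.2 (mem_ball_self (by have := hr0 z0 hs; positivity))
      have hsep := hrsep s hs z0 hz0S hne
      have hle : dist s z0 ≤ r s := by rw [dist_comm]; exact mem_closedBall.mp hz0.1
      linarith [hr0 s hs]
  choose! c hc0 hc using H3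
  obtain ⟨s₀, hs₀, hcmin⟩ := Set.exists_min_image S c hSfin hSne
  set ε' := min ε₀ (c s₀) with hε'def
  have hε'pos : 0 < ε' := lt_min hε₀ (hc0 s₀ hs₀)
  have hε'le : ∀ s ∈ S, ε' ≤ c s := fun s hs => (min_le_right _ _).trans (hcmin s hs)
  have H4 : ∀ s ∈ S, ∃ g : X → EuclideanSpace ℝ (Fin n), Continuous g ∧
      (∀ z ∈ closedBall s (r s), dist (f z) (g z) < ε') ∧
      (∀ z ∈ closedBall s (r s), g z ≠ y) := by
    intro s hs
    have hW : ¬ IsStableValueOn f (closedBall s (r s)) y := by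
      intro h
      exact hVns s hs (stableValueOn_mono (fun z hz => (hrsub s hs hz).1) h)
    rw [IsStableValueOn, IsStableValue] at hW; push_neg at hW
    obtain ⟨g0, hg0c, hg0d, hg0y⟩ := hW ε' hε'pos
    obtain ⟨G, hG⟩ := ContinuousMap.exists_restrict_eq Metric.isClosed_closedBall ⟨g0, hg0c⟩
    refine ⟨G, G.continuous, fun z hz => ?_, fun z hz => ?_⟩ <;>
      have hGz : G z = g0 ⟨z, hz⟩ := by
        simpa using DFunLike.congr_fun hG ⟨z, hz⟩
    · rw [hGz]; exact hg0d ⟨z, hz⟩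
    · rw [hGz]; intro h; exact hg0y ⟨⟨z, hz⟩, h⟩
  choose! g hgc hgd hgy using H4
  set φ : X → X → ℝ := fun s z => max 0 (min 1 (2 - 2 * dist z s / r s)) with hφdef
  have hφcont : ∀ s, Continuous (φ s) := by
    intro s
    apply Continuous.max continuous_const
    apply Continuous.min continuous_const
    fun_prop
  have hφ0 : ∀ s z, 0 ≤ φ s z := fun s z => le_max_left _ _
  have hφle1 : ∀ s z, φ s z ≤ 1 := fun s z => max_le zero_le_one (min_le_left _ _)
  have hφ1 : ∀ s ∈ S, ∀ z, dist z s ≤ r s / 2 → φ s z = 1 := by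
    intro s hs z hz
    have hrs := hr0 s hs
    have h1 : (1:ℝ) ≤ 2 - 2 * dist z s / r s := by
      have : 2 * dist z s / r s ≤ 1 := by
        rw [div_le_one hrs]; linarith
      linarith
    simp [hφdef, min_eq_left h1]
  have hφsupp : ∀ s ∈ S, ∀ z, φ s z ≠ 0 → dist z s < r s := by
    intro s hs z hne
    by_contra h
    push_neg at h
    have hrs := hr0 s hs
    have h1 : 2 - 2 * dist z s / r s ≤ 0 := by
      have : (1:ℝ) ≤ dist z s / r s := (one_le_div hrs).mpr h
      have : (2:ℝ) ≤ 2 * dist z s / r s := by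
        rw [mul_div_assoc]; linarith
      linarith
    exact hne (max_eq_left ((min_le_right _ _).trans h1))
  set T := hSfin.toFinset with hTdef
  have hTmem : ∀ s, s ∈ T ↔ s ∈ S := fun s => hSfin.mem_toFinset
  set Hm : X → EuclideanSpace ℝ (Fin n) :=
    fun z => f z + ∑ s ∈ T, φ s z • (g s z - f z) with hHdef
  have hHc : Continuous Hm := by
    apply hf.add
    apply continuous_finset_sum
    intro s hs
    exact (hφcont s).smul ((hgc s ((hTmem s).mp hs)).sub hf)
  have hcollapse : ∀ z, ∀ s ∈ T, φ s z ≠ 0 →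
      (∑ t ∈ T, φ t z • (g t z - f z)) = φ s z • (g s z - f z) := by
    intro z s hsT hsφ
    apply Finset.sum_eq_single_of_mem s hsT
    intro t htT hts
    have hsS := (hTmem s).mp hsT
    have htS := (hTmem t).mp htT
    by_contra hne
    have htφ : φ t z ≠ 0 := fun h => hne (by rw [h, zero_smul])
    have h1 : dist z s < r s := hφsupp s hsS z hsφ
    have h2 : dist z t < r t := hφsupp t htS z htφ
    have h3 : 2 * r s < dist s t := hrsep s hsS t htS hts
    have h4 : 2 * r t < dist t s := hrsep t htS s hsS (Ne.symm hts)
    have h5 : dist s t ≤ dist s z + dist z t := dist_triangle s z t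
    rw [dist_comm s z] at h5
    rw [dist_comm t s] at h4
    linarith
  have hclose : ∀ z, dist (Hm z) (f z) < ε' := by
    intro z
    have heq : Hm z - f z = ∑ s ∈ T, φ s z • (g s z - f z) :=
      add_sub_cancel_left (f z) _
    rw [dist_eq_norm, heq]
    by_cases hex : ∃ s ∈ T, φ s z ≠ 0
    · obtain ⟨s, hsT, hsφ⟩ := hex
      have hsS := (hTmem s).mp hsT
      rw [hcollapse z s hsT hsφ]
      have hzcb : z ∈ closedBall s (r s) := mem_closedBall.mpr (hφsupp s hsS z hsφ).le
      calc ‖φ s z • (g s z - f z)‖ = φ s z * ‖g s z - f z‖ := by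
            rw [norm_smul, Real.norm_of_nonneg (hφ0 s z)]
        _ ≤ 1 * ‖g s z - f z‖ := by
            apply mul_le_mul_of_nonneg_right (hφle1 s z) (norm_nonneg _)
        _ = dist (f z) (g s z) := by rw [one_mul, dist_eq_norm, norm_sub_rev]
        _ < ε' := hgd s hsS z hzcb
    · push_neg at hex
      rw [Finset.sum_eq_zero (fun s hs => by rw [hex s hs, zero_smul])]
      simpa using hε'pos
  have havoid : ∀ z ∈ U, Hm z ≠ y := by
    intro z hzU hHz
    by_cases hex : ∃ s ∈ T, φ s z ≠ 0
    · obtain ⟨s, hsT, hsφ⟩ := hex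
      have hsS := (hTmem s).mp hsT
      have hzb : dist z s < r s := hφsupp s hsS z hsφ
      have hzcb : z ∈ closedBall s (r s) := mem_closedBall.mpr hzb.le
      by_cases hhalf : dist z s ≤ r s / 2
      · have hφone : φ s z = 1 := hφ1 s hsS z hhalf
        have : Hm z = g s z := by
          rw [hHdef]
          show f z + ∑ t ∈ T, φ t z • (g t z - f z) = g s z
          rw [hcollapse z s hsT hsφ, hφone, one_smul]
          abel
        exact hgy s hsS z hzcb (this ▸ hHz)
      · push_neg at hhalf
        have hann : z ∈ closedBall s (r s) \ ball s (r s / 2) :=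
          ⟨hzcb, fun h => absurd (mem_ball.mp h) (not_lt.mpr hhalf.le)⟩
        have h1 : c s ≤ dist (f z) y := hc s hsS z hann
        have h2 : dist (Hm z) (f z) < ε' := hclose z
        have h3 : ε' ≤ c s := hε'le s hsS
        rw [hHz, dist_comm] at h2
        linarith
    · push_neg at hex
      have : Hm z = f z := by
        rw [hHdef]
        show f z + ∑ t ∈ T, φ t z • (g t z - f z) = f z
        rw [Finset.sum_eq_zero (fun s hs => by rw [hex s hs, zero_smul])]
        abel
      have hfz : f z = y := by rw [← this, hHz]
      have hzS : z ∈ S := ⟨hfz, hzU⟩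
      have hzT : z ∈ T := (hTmem z).mpr hzS
      have : φ z z = 1 := hφ1 z hzS z (by
        rw [dist_self]; have := hr0 z hzS; positivity)
      exact one_ne_zero (this ▸ hex z hzT)
  obtain ⟨u, hu⟩ := hstab (fun u : U => Hm u) (hHc.comp continuous_subtype_val)
    (fun u => by
      have := hclose u.1
      rw [dist_comm] at this
      exact lt_of_lt_of_le this (min_le_left _ _))
  exact havoid u.1 u.2 hu

theorem stable_points_semicontinuity' {X : Type*} [MetricSpace X] [CompactSpace X] (n : ℕ)
    (f : X → EuclideanSpace ℝ (Fin n)) (hf : Continuous f)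
    (N : ℕ) (hmult : ∀ y, (f ⁻¹' {y}).encard ≤ N) :
    ∀ (y : EuclideanSpace ℝ (Fin n)), ∀ ε > (0:ℝ), ∃ δ > (0:ℝ),
      ∀ y' ∈ Metric.ball y δ, ∀ x : X, f x = y → IsStablePoint f x →
        ∃ x' : X, f x' = y' ∧ IsStablePoint f x' ∧ x' ∈ Metric.ball x ε := by
  classical
  intro y ε hε
  set SP : Set X := {x | f x = y ∧ IsStablePoint f x} with hSP
  have hSPfin : SP.Finite := by
    have h1 : (f ⁻¹' {y}).Finite := by
      rw [← Set.encard_lt_top_iff]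
      exact lt_of_le_of_lt (hmult y) (WithTop.coe_lt_top N)
    exact h1.subset (fun x hx => hx.1)
  set F : X → ℝ := fun x =>
    if h : IsStableValueOn f (Metric.ball x ε) y then h.choose else 1 with hF
  have hFspec : ∀ x ∈ SP, 0 < F x ∧
      ∀ g : ↥(Metric.ball x ε) → EuclideanSpace ℝ (Fin n),
        Continuous g → (∀ u, dist (f u.1) (g u) < F x) → y ∈ range g := by
    intro x hx
    have hsv : IsStableValueOn f (Metric.ball x ε) y := by
      have := hx.2 (Metric.ball x ε) (Metric.ball_mem_nhds x hε)
      rwa [hx.1] at this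
    have hFx : F x = hsv.choose := by rw [hF]; simp only [dif_pos hsv]
    rw [hFx]
    exact ⟨hsv.choose_spec.1, hsv.choose_spec.2⟩
  rcases SP.eq_empty_or_nonempty with hSPe | hSPne
  · exact ⟨1, one_pos, fun y' hy' x hfx hst =>
      absurd (show x ∈ SP from ⟨hfx, hst⟩) (by simp [hSPe])⟩
  · obtain ⟨x₀, hx₀, hFmin⟩ := Set.exists_min_image SP F hSPfin hSPne
    refine ⟨F x₀, (hFspec x₀ hx₀).1, ?_⟩
    intro y' hy' x hfx hst
    have hxSP : x ∈ SP := ⟨hfx, hst⟩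
    obtain ⟨hFx, hFprop⟩ := hFspec x hxSP
    have hd : dist y' y < F x := lt_of_lt_of_le (mem_ball.mp hy') (hFmin x hxSP)
    have hsv' : IsStableValueOn f (Metric.ball x ε) y' :=
      stableValue_shift hFx hFprop hd
    obtain ⟨x', hx'mem, hfx', hstx'⟩ := stable_value_exists_stable_point hf hmult
      Metric.isOpen_ball hsv'
    exact ⟨x', hfx', hstx', hx'mem⟩

/-- **Bonk–Kleiner, Lemma 3.7 (semicontinuity).** For a continuous map of bounded
multiplicity `f : X → ℝⁿ` on a compact metric space all of whose nonempty open
subsets have topological dimension at least `n`: for every `y ∈ ℝⁿ` and `ε > 0`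
there is `δ > 0` such that for every `y' ∈ B(y,δ)` and every stable point
`x ∈ f⁻¹(y)` there is a stable point in `f⁻¹(y') ∩ B(x,ε)`. -/
theorem stable_points_semicontinuity {X : Type*} [MetricSpace X] [CompactSpace X] (n : ℕ)
    (hdim : ∀ U : Set X, IsOpen U → U.Nonempty → (n : ℕ∞) ≤ topDim ↥U)
    (f : X → EuclideanSpace ℝ (Fin n)) (hf : Continuous f)
    (N : ℕ) (hmult : ∀ y, (f ⁻¹' {y}).encard ≤ N) :
    ∀ (y : EuclideanSpace ℝ (Fin n)), ∀ ε > (0:ℝ), ∃ δ > (0:ℝ),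
      ∀ y' ∈ Metric.ball y δ, ∀ x : X, f x = y → IsStablePoint f x →
        ∃ x' : X, f x' = y' ∧ IsStablePoint f x' ∧ x' ∈ Metric.ball x ε :=
  stable_points_semicontinuity' n f hf N hmult
end
end

section
/- Suppose X is a metric space and f : X → ℝⁿ is a regular map with multiplicity constant N ∈ ℕ. Assume there is an open ball B ⊆ ℝⁿ and a set U ⊆ f⁻¹(B) such that g := f|_U : U → B is a homeomorphism of U onto B. Then g is bi-Lipschitz; in fact, if f is L-Lipschitz, then d_X(x,y) ≤ 4N·|f(x) − f(y)| and |f(x) − f(y)| ≤ L·d_X(x,y) for all x, y ∈ U. -/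
open Metric Set MeasureTheory Filter Topology

noncomputable section

/-!
The preimage `S` under `f|_U` of the segment `[f x, f y] ⊆ B` is connected and lies in
`f⁻¹(B̄(f x, R))`, `R = |f x - f y|`, so for every `ρ > R` it is covered by `N` balls of radius `ρ`.
A connected set covered by `k` balls of radius `ρ` has diameter at most `2kρ`: the distances
to `x` of the points of `S` fill the interval `[0, d(x, y)]`, while each ball contributes a
set of reals of diameter at most `2ρ`, so comparing Lebesgue measures gives `d(x, y) ≤ 2kρ`.
-/

theorem IsPreconnected.dist_le_of_subset_biUnion_ball {X ι : Type*} [PseudoMetricSpace X]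
    {S : Set X} (hS : IsPreconnected S) (t : Finset ι) (c : ι → X) {ρ : ℝ}
    (hcover : S ⊆ ⋃ i ∈ t, ball (c i) ρ) {x y : X} (hx : x ∈ S) (hy : y ∈ S) :
    dist x y ≤ 2 * ρ * t.card := by
  have hρ : 0 ≤ ρ := by
    obtain ⟨i, -, hi⟩ := mem_iUnion₂.1 (hcover hx)
    exact dist_nonneg.trans (mem_ball.1 hi).le
  have hIcc : Icc 0 (dist x y) ⊆ ⋃ i ∈ t, dist x '' ball (c i) ρ := by
    have hconn : IsPreconnected (dist x '' S) := hS.image _ (by fun_prop)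
    calc Icc 0 (dist x y) = Icc (dist x x) (dist x y) := by rw [dist_self]
      _ ⊆ dist x '' S := hconn.Icc_subset (mem_image_of_mem _ hx) (mem_image_of_mem _ hy)
      _ ⊆ dist x '' ⋃ i ∈ t, ball (c i) ρ := image_mono hcover
      _ = ⋃ i ∈ t, dist x '' ball (c i) ρ := image_iUnion₂ _ _
  have hdiam (i : ι) : ediam (dist x '' ball (c i) ρ) ≤ ENNReal.ofReal (2 * ρ) := by
    refine ediam_le_of_forall_dist_le ?_
    rintro _ ⟨z, hz, rfl⟩ _ ⟨w, hw, rfl⟩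
    calc dist (dist x z) (dist x w) ≤ dist z w := by
          rw [Real.dist_eq, dist_comm x z, dist_comm x w]; exact abs_dist_sub_le z w x
      _ ≤ dist z (c i) + dist w (c i) := dist_triangle_right z w (c i)
      _ ≤ 2 * ρ := by linarith [mem_ball.1 hz, mem_ball.1 hw]
  have hvol : ENNReal.ofReal (dist x y) ≤ ENNReal.ofReal (2 * ρ * t.card) :=
    calc ENNReal.ofReal (dist x y) = volume (Icc 0 (dist x y)) := by
          rw [Real.volume_Icc, sub_zero]
      _ ≤ ∑ i ∈ t, volume (dist x '' ball (c i) ρ) :=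
          (measure_mono hIcc).trans (measure_biUnion_finset_le _ _)
      _ ≤ ∑ _i ∈ t, ENNReal.ofReal (2 * ρ) :=
          Finset.sum_le_sum fun i _ => (Real.volume_le_diam _).trans (hdiam i)
      _ = ENNReal.ofReal (2 * ρ * t.card) := by
          rw [Finset.sum_const, nsmul_eq_mul, ENNReal.ofReal_mul' (Nat.cast_nonneg _),
            ENNReal.ofReal_natCast, mul_comm]
  exact (ENNReal.ofReal_le_ofReal_iff (by positivity)).1 hvol

theorem IsPreconnected.dist_le_of_mapsTo_closedBall {X Y : Type*} [PseudoMetricSpace X]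
    [PseudoMetricSpace Y] {f : X → Y} {N : ℕ}
    (hcover : ∀ (y : Y) (r : ℝ), 0 < r →
      ∃ t : Finset X, t.card ≤ N ∧ f ⁻¹' ball y r ⊆ ⋃ c ∈ t, ball c r)
    {S : Set X} (hS : IsPreconnected S) {a : Y} {R : ℝ} (hSa : MapsTo f S (closedBall a R))
    {x y : X} (hx : x ∈ S) (hy : y ∈ S) :
    dist x y ≤ 2 * N * R := by
  have hR : 0 ≤ R := dist_nonneg.trans (mem_closedBall.1 (hSa hx))
  have hlim : Tendsto (fun ρ : ℝ => 2 * N * ρ) (𝓝[>] R) (𝓝 (2 * N * R)) :=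
    (Continuous.tendsto (by fun_prop) R).mono_left nhdsWithin_le_nhds
  refine ge_of_tendsto hlim ?_
  filter_upwards [self_mem_nhdsWithin] with ρ (hρ : R < ρ)
  obtain ⟨t, htN, ht⟩ := hcover a ρ (hR.trans_lt hρ)
  have hSt : S ⊆ ⋃ c ∈ t, ball c ρ := fun z hz =>
    ht (mem_ball.2 ((mem_closedBall.1 (hSa hz)).trans_lt hρ))
  calc dist x y ≤ 2 * ρ * t.card := hS.dist_le_of_subset_biUnion_ball t id hSt hx hy
    _ ≤ 2 * N * ρ := by
      rw [mul_right_comm]; gcongr; linarith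

theorem exists_isPreconnected_mapsTo_segment_of_homeomorph {X E : Type*} [TopologicalSpace X]
    [AddCommGroup E] [Module ℝ E] [TopologicalSpace E] [IsTopologicalAddGroup E]
    [ContinuousSMul ℝ E] {f : X → E} {U : Set X} {s : Set E} (hs : Convex ℝ s) (e : U ≃ₜ s)
    (he : ∀ x : U, (e x : E) = f x) {x y : X} (hx : x ∈ U) (hy : y ∈ U) :
    ∃ S : Set X, IsPreconnected S ∧ x ∈ S ∧ y ∈ S ∧ MapsTo f S (segment ℝ (f x) (f y)) := by
  have hseg : segment ℝ (f x) (f y) ⊆ s :=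
    hs.segment_subset (he ⟨x, hx⟩ ▸ (e _).2) (he ⟨y, hy⟩ ▸ (e _).2)
  have hconn : IsPreconnected (Subtype.val ⁻¹' segment ℝ (f x) (f y) : Set s) := by
    rw [← IsInducing.subtypeVal.isPreconnected_image, Subtype.image_preimage_coe,
      inter_eq_right.2 hseg]
    exact (convex_segment _ _).isPreconnected
  refine ⟨(fun p => (e.symm p : X)) '' (Subtype.val ⁻¹' segment ℝ (f x) (f y)),
    hconn.image _ (by fun_prop), ⟨e ⟨x, hx⟩, ?_, by simp⟩, ⟨e ⟨y, hy⟩, ?_, by simp⟩, ?_⟩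
  · simpa [he] using left_mem_segment ℝ (f x) (f y)
  · simpa [he] using right_mem_segment ℝ (f x) (f y)
  · rintro _ ⟨p, hp, rfl⟩
    simpa [← he] using hp

theorem regular_homeo_onto_ball_is_biLipschitz_general {X : Type*} [MetricSpace X] (n : ℕ)
    (f : X → EuclideanSpace ℝ (Fin n))
    (L : NNReal) (hLip : LipschitzWith L f) (N : ℕ)
    (hreg : ∀ (y : EuclideanSpace ℝ (Fin n)) (r : ℝ), 0 < r →
      ∃ t : Finset X, t.card ≤ N ∧
        f ⁻¹' Metric.ball y r ⊆ ⋃ c ∈ t, Metric.ball c r)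
    (c : EuclideanSpace ℝ (Fin n)) (r : ℝ) (U : Set X)
    (e : ↥U ≃ₜ ↥(Metric.ball c r))
    (he : ∀ x : ↥U, (e x : EuclideanSpace ℝ (Fin n)) = f ↑x) :
    ∀ x ∈ U, ∀ y ∈ U,
      dist x y ≤ 4 * N * dist (f x) (f y) ∧ dist (f x) (f y) ≤ L * dist x y := by
  intro x hx y hy
  obtain ⟨S, hS, hxS, hyS, hfS⟩ :=
    exists_isPreconnected_mapsTo_segment_of_homeomorph (convex_ball c r) e he hx hy
  have hxy : dist x y ≤ 2 * N * dist (f x) (f y) :=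
    hS.dist_le_of_mapsTo_closedBall hreg (hfS.mono_right (segment_subset_closedBall_left _ _))
      hxS hyS
  exact ⟨hxy.trans (by gcongr; norm_num), hLip.dist_le_mul x y⟩

/-- **Bonk–Kleiner, Lemma 4.2.** If `f : X → ℝⁿ` is a regular map (Lipschitz with
constant `L`, and preimages of balls are covered by at most `N` balls of the same
radius), `B ⊆ ℝⁿ` is an open ball and `U ⊆ f⁻¹(B)` is such that `f|_U : U → B` is a
homeomorphism, then `f|_U` is bi-Lipschitz: `d_X(x,y) ≤ 4N·|f(x) − f(y)|` and
`|f(x) − f(y)| ≤ L·d_X(x,y)` for `x, y ∈ U`. -/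
theorem regular_homeo_onto_ball_is_biLipschitz {X : Type*} [MetricSpace X] (n : ℕ)
    (f : X → EuclideanSpace ℝ (Fin n))
    (L : NNReal) (hLip : LipschitzWith L f) (N : ℕ)
    (hreg : ∀ (y : EuclideanSpace ℝ (Fin n)) (r : ℝ), 0 < r →
      ∃ t : Finset X, t.card ≤ N ∧
        f ⁻¹' Metric.ball y r ⊆ ⋃ c ∈ t, Metric.ball c r)
    (c : EuclideanSpace ℝ (Fin n)) (r : ℝ) (hr : 0 < r) (U : Set X)
    (hU : U ⊆ f ⁻¹' Metric.ball c r)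
    (e : ↥U ≃ₜ ↥(Metric.ball c r))
    (he : ∀ x : ↥U, (e x : EuclideanSpace ℝ (Fin n)) = f ↑x) :
    ∀ x ∈ U, ∀ y ∈ U,
      dist x y ≤ 4 * N * dist (f x) (f y) ∧ dist (f x) (f y) ≤ L * dist x y :=
  regular_homeo_onto_ball_is_biLipschitz_general n f L hLip N hreg c r U e he

end
end

section
/- If E is a compact connected subset of a metric space that is covered by finitely many open balls B(x₁,r₁), …, B(x_k,r_k), then the diameter of E is at most twice the sum of the radii: diam(E) ≤ 2(r₁ + ⋯ + r_k). -/
open Metric Set MeasureTheory Filter Topology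

noncomputable section

/-! Call two balls adjacent when they meet inside `E`. Since the balls are open, the points of
`E` lying in balls reachable from a fixed ball form a relatively clopen subset of `E`, so
connectedness joins any two balls meeting `E` by a path in this overlap graph. Following a simple
path from `a` to `b`, each step stays inside one ball and no ball is visited twice, so
`dist a b ≤ ∑ i, diam (B i) ≤ 2 * ∑ i, r i`. -/

section OverlapGraph

variable {X ι : Type*}

def overlapGraph (E : Set X) (U : ι → Set X) : SimpleGraph ι :=
  SimpleGraph.fromRel fun i j => (E ∩ U i ∩ U j).Nonempty

theorem overlapGraph_reachable_of_mem {E : Set X} {U : ι → Set X} {a : X}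
    {i j : ι} (ha : a ∈ E) (hi : a ∈ U i) (hj : a ∈ U j) : (overlapGraph E U).Reachable i j := by
  rcases eq_or_ne i j with rfl | hne
  · rfl
  · exact SimpleGraph.Adj.reachable ⟨hne, .inl ⟨a, ⟨ha, hi⟩, hj⟩⟩

theorem IsPreconnected.overlapGraph_reachable [TopologicalSpace X] {E : Set X} {U : ι → Set X}
    (hE : IsPreconnected E) (hU : ∀ i, IsOpen (U i)) (hcover : E ⊆ ⋃ i, U i) {a b : X}
    (ha : a ∈ E) (hb : b ∈ E) {i j : ι} (hi : a ∈ U i) (hj : b ∈ U j) :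
    (overlapGraph E U).Reachable i j := by
  let P : X → X → Prop := fun a b => ∀ i j, a ∈ U i → b ∈ U j → (overlapGraph E U).Reachable i j
  refine hE.induction₂ P (fun a ha => ?_) (fun a b c _ hb _ hab hbc i j hi hj => ?_)
    (fun a b _ _ hab i j hi hj => (hab j i hj hi).symm) ha hb i j hi hj
  · obtain ⟨m, ham⟩ := mem_iUnion.1 (hcover ha)
    filter_upwards [inter_mem_nhdsWithin E ((hU m).mem_nhds ham)] with b ⟨hbE, hbm⟩ i j hi hj
    exact (overlapGraph_reachable_of_mem ha hi ham).trans
      (overlapGraph_reachable_of_mem hbE hbm hj)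
  · obtain ⟨m, hbm⟩ := mem_iUnion.1 (hcover hb)
    exact (hab i m hi hbm).trans (hbc m j hbm hj)

theorem dist_le_sum_diam_of_walk [PseudoMetricSpace X] {E : Set X} {U : ι → Set X}
    (hU : ∀ i, Bornology.IsBounded (U i)) {i j : ι} (p : (overlapGraph E U).Walk i j) {a b : X}
    (ha : a ∈ U i) (hb : b ∈ U j) : dist a b ≤ (p.support.map fun v => diam (U v)).sum := by
  induction p generalizing a with
  | nil => simpa using dist_le_diam_of_mem (hU _) ha hb
  | @cons i m j hadj q ih =>
    obtain ⟨c, hci, hcm⟩ : ∃ c, c ∈ U i ∧ c ∈ U m := by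
      rcases hadj.2 with ⟨c, ⟨-, hci⟩, hcm⟩ | ⟨c, ⟨-, hcm⟩, hci⟩ <;> exact ⟨c, hci, hcm⟩
    simp only [SimpleGraph.Walk.support_cons, List.map_cons, List.sum_cons]
    calc dist a b ≤ dist a c + dist c b := dist_triangle a c b
      _ ≤ _ := add_le_add (dist_le_diam_of_mem (hU i) ha hci) (ih hcm hb)

theorem dist_le_sum_diam_of_reachable [PseudoMetricSpace X] [Fintype ι]
    {E : Set X} {U : ι → Set X} (hU : ∀ i, Bornology.IsBounded (U i)) {i j : ι}
    (h : (overlapGraph E U).Reachable i j) {a b : X} (ha : a ∈ U i) (hb : b ∈ U j) :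
    dist a b ≤ ∑ v, diam (U v) := by
  classical
  obtain ⟨p⟩ := h
  calc dist a b ≤ (p.bypass.support.map fun v => diam (U v)).sum :=
        dist_le_sum_diam_of_walk hU p.bypass ha hb
    _ = ∑ v ∈ p.bypass.support.toFinset, diam (U v) :=
      (List.sum_toFinset _ p.bypass_isPath.support_nodup).symm
    _ ≤ ∑ v, diam (U v) := Finset.sum_le_univ_sum_of_nonneg fun _ => diam_nonneg

theorem IsPreconnected.diam_le_sum_diam [PseudoMetricSpace X] [Fintype ι] {E : Set X}
    {U : ι → Set X} (hE : IsPreconnected E) (hUo : ∀ i, IsOpen (U i))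
    (hUb : ∀ i, Bornology.IsBounded (U i)) (hcover : E ⊆ ⋃ i, U i) :
    diam E ≤ ∑ i, diam (U i) := by
  refine diam_le_of_forall_dist_le (Finset.sum_nonneg fun _ _ => diam_nonneg) fun a ha b hb => ?_
  obtain ⟨i, hi⟩ := mem_iUnion.1 (hcover ha)
  obtain ⟨j, hj⟩ := mem_iUnion.1 (hcover hb)
  exact dist_le_sum_diam_of_reachable hUb (hE.overlapGraph_reachable hUo hcover ha hb hi hj) hi hj

end OverlapGraph

theorem diam_le_two_mul_sum_radii_of_cover_general {X : Type*} [MetricSpace X] (E : Set X)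
    (hconn : IsConnected E)
    (k : ℕ) (x : Fin k → X) (r : Fin k → ℝ) (hr : ∀ i, 0 < r i)
    (hcover : E ⊆ ⋃ i, Metric.ball (x i) (r i)) :
    Metric.diam E ≤ 2 * ∑ i, r i := by
  calc diam E ≤ ∑ i, diam (ball (x i) (r i)) :=
        hconn.isPreconnected.diam_le_sum_diam (fun _ => isOpen_ball) (fun _ => isBounded_ball)
          hcover
    _ ≤ ∑ i, 2 * r i := Finset.sum_le_sum fun i _ => diam_ball (hr i).le
    _ = 2 * ∑ i, r i := (Finset.mul_sum ..).symm

/-- If a compact connected set `E` in a metric space is covered by finitely many open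
balls, then the diameter of `E` is at most twice the sum of the radii. -/
theorem diam_le_two_mul_sum_radii_of_cover {X : Type*} [MetricSpace X] (E : Set X)
    (hcomp : IsCompact E) (hconn : IsConnected E)
    (k : ℕ) (x : Fin k → X) (r : Fin k → ℝ) (hr : ∀ i, 0 < r i)
    (hcover : E ⊆ ⋃ i, Metric.ball (x i) (r i)) :
    Metric.diam E ≤ 2 * ∑ i, r i :=
  diam_le_two_mul_sum_radii_of_cover_general E hconn k x r hr hcover
end
end

section
/- Let X be a compact metric space, Y a separable metric space, and f : X → Y a light continuous map. Then the topological dimension does not decrease under f: dim_top(Y) ≥ dim_top(Im(f)) ≥ dim_top(X), where dim_top denotes Lebesgue covering dimension. -/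
open Metric Set MeasureTheory Filter Topology

noncomputable section

/-- A finite pairwise-disjoint family of compact sets in a metric space admits a common
thickening radius keeping them pairwise disjoint. -/
lemma aux_exists_thickening_radius {X : Type*} [MetricSpace X] {m : ℕ} (K : Fin m → Set X)
    (hK : ∀ i, IsCompact (K i)) (hd : ∀ i j : Fin m, i ≠ j → Disjoint (K i) (K j)) :
    ∃ δ : ℝ, 0 < δ ∧ ∀ i j : Fin m, i ≠ j →
      Disjoint (thickening δ (K i)) (thickening δ (K j)) := by
  classical
  have h : ∀ p : Fin m × Fin m, ∃ δ : ℝ, 0 < δ ∧ (p.1 ≠ p.2 →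
      Disjoint (thickening δ (K p.1)) (thickening δ (K p.2))) := by
    intro p
    by_cases hp : p.1 ≠ p.2
    · obtain ⟨δ, hδ, hdis⟩ := (hd p.1 p.2 hp).exists_thickenings (hK _) (hK _).isClosed
      exact ⟨δ, hδ, fun _ => hdis⟩
    · exact ⟨1, one_pos, fun h' => absurd h' hp⟩
  choose d dpos hd2 using h
  set s : Finset ℝ := insert 1 (Finset.univ.image d) with hs_def
  have hs : s.Nonempty := ⟨1, Finset.mem_insert_self _ _⟩
  refine ⟨s.min' hs, ?_, ?_⟩
  · rcases Finset.mem_insert.1 (s.min'_mem hs) with h | h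
    · rw [h]; exact one_pos
    · obtain ⟨p, _, hp⟩ := Finset.mem_image.1 h
      rw [← hp]; exact dpos p
  · intro i j hij
    have hle : s.min' hs ≤ d (i, j) :=
      Finset.min'_le _ _ (Finset.mem_insert_of_mem
        (Finset.mem_image_of_mem _ (Finset.mem_univ _)))
    exact Disjoint.mono (thickening_mono hle _) (thickening_mono hle _) (hd2 (i, j) hij)

/-- A compact totally disconnected subset of a metric space covered by a family of open sets
can be covered by finitely many pairwise disjoint open sets refining the family. -/
lemma aux_exists_disjoint_open_family {X : Type*} [MetricSpace X] (𝒰 : Set (Set X))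
    (hU : ∀ U ∈ 𝒰, IsOpen U) (K : Set X) (hKc : IsCompact K)
    (hKd : IsTotallyDisconnected K) (hcov : K ⊆ ⋃₀ 𝒰) :
    ∃ (m : ℕ) (O : Fin m → Set X), (∀ i, IsOpen (O i)) ∧ (∀ i, ∃ U ∈ 𝒰, O i ⊆ U) ∧
      (∀ i j : Fin m, i ≠ j → Disjoint (O i) (O j)) ∧ K ⊆ ⋃ i, O i := by
  classical
  haveI : CompactSpace K := isCompact_iff_compactSpace.1 hKc
  haveI : TotallyDisconnectedSpace K := totallyDisconnectedSpace_subtype_iff.2 hKd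
  have hpt : ∀ k : K, ∃ U ∈ 𝒰, (k : X) ∈ U := fun k => hcov k.2
  choose Uf hUf hkUf using hpt
  have hclo : ∀ k : K, ∃ C : Set K, IsClopen C ∧ k ∈ C ∧ C ⊆ Subtype.val ⁻¹' (Uf k) :=
    fun k => compact_exists_isClopen_in_isOpen
      ((hU _ (hUf k)).preimage continuous_subtype_val) (hkUf k)
  choose C hCclopen hkC hCsub using hclo
  obtain ⟨t, ht⟩ := isCompact_univ.elim_finite_subcover C (fun k => (hCclopen k).2)
    (fun k _ => mem_iUnion.2 ⟨k, hkC k⟩)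
  set m := t.card with hm
  set e : Fin m → K := fun i => (t.equivFin.symm i : K) with he
  set D : Fin m → Set K := fun i => C (e i) \ ⋃ (j : Fin m) (_ : j < i), C (e j) with hD_def
  have hDclosed : ∀ i, IsClosed (D i) :=
    fun i => (hCclopen _).isClosed.sdiff
      (isOpen_iUnion fun j => isOpen_iUnion fun _ => (hCclopen _).isOpen)
  have hDdisj : ∀ i j : Fin m, i ≠ j → Disjoint (D i) (D j) := by
    have key : ∀ i j : Fin m, i < j → Disjoint (D i) (D j) := fun i j hij =>
      Set.disjoint_left.2 fun x hxi hxj => hxj.2 (mem_iUnion.2 ⟨i, mem_iUnion.2 ⟨hij, hxi.1⟩⟩)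
    intro i j hij
    rcases hij.lt_or_gt with h | h
    · exact key i j h
    · exact (key j i h).symm
  have hO'c : ∀ i, IsCompact (Subtype.val '' D i) :=
    fun i => ((hDclosed i).isCompact).image continuous_subtype_val
  have hO'd : ∀ i j : Fin m, i ≠ j →
      Disjoint (Subtype.val '' D i) (Subtype.val '' D j) :=
    fun i j hij => (Set.disjoint_image_iff Subtype.val_injective).2 (hDdisj i j hij)
  obtain ⟨δ, δpos, hδ⟩ := aux_exists_thickening_radius _ hO'c hO'd
  refine ⟨m, fun i => Uf (e i) ∩ thickening δ (Subtype.val '' D i),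
    fun i => (hU _ (hUf _)).inter isOpen_thickening,
    fun i => ⟨Uf (e i), hUf _, inter_subset_left⟩,
    fun i j hij => Disjoint.mono inter_subset_right inter_subset_right (hδ i j hij), ?_⟩
  intro x hx
  have hxC : ∃ i : Fin m, (⟨x, hx⟩ : K) ∈ C (e i) := by
    obtain ⟨k', hk't, hk'⟩ := mem_iUnion₂.1 (ht (mem_univ (⟨x, hx⟩ : K)))
    refine ⟨t.equivFin ⟨k', hk't⟩, ?_⟩
    have : e (t.equivFin ⟨k', hk't⟩) = k' := by simp [he]
    rwa [this]
  set s : Finset (Fin m) := Finset.univ.filter (fun i => (⟨x, hx⟩ : K) ∈ C (e i)) with hs_def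
  have hsne : s.Nonempty := by
    obtain ⟨i, hi⟩ := hxC
    exact ⟨i, Finset.mem_filter.2 ⟨Finset.mem_univ _, hi⟩⟩
  set i₀ := s.min' hsne with hi₀
  have hi₀mem : (⟨x, hx⟩ : K) ∈ C (e i₀) := (Finset.mem_filter.1 (s.min'_mem hsne)).2
  have hxD : (⟨x, hx⟩ : K) ∈ D i₀ := by
    refine ⟨hi₀mem, fun hmem => ?_⟩
    obtain ⟨j, hj⟩ := mem_iUnion.1 hmem
    obtain ⟨hji, hjC⟩ := mem_iUnion.1 hj
    exact absurd (s.min'_le j (Finset.mem_filter.2 ⟨Finset.mem_univ _, hjC⟩)) (not_le.2 hji)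
  refine mem_iUnion.2 ⟨i₀, ⟨hCsub (e i₀) hi₀mem, ?_⟩⟩
  exact self_subset_thickening δpos _ (mem_image_of_mem _ hxD)

/-- Covering dimension bound passes to subsets with closed... actually any subset whose
complement is open; we use closed subsets. -/
lemma aux_covDimLE_subset {Y : Type*} [TopologicalSpace Y] {R : Set Y} (hR : IsClosed R)
    {n : ℕ} (h : covDimLE Y n) : covDimLE R n := by
  classical
  intro 𝒰 hUo hUc
  rcases isEmpty_or_nonempty R with hE | hNe
  · refine ⟨∅, by simp, ?_, by simp, by simp⟩
    rw [Set.sUnion_empty, eq_comm, Set.univ_eq_empty_iff]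
    exact hE
  · have hUne : ∃ U₀, U₀ ∈ 𝒰 := by
      obtain ⟨x⟩ := hNe
      have : (x : R) ∈ ⋃₀ 𝒰 := hUc ▸ mem_univ x
      obtain ⟨U₀, hU₀, _⟩ := this
      exact ⟨U₀, hU₀⟩
    obtain ⟨U₀, hU₀⟩ := hUne
    have hext : ∀ U : Set R, U ∈ 𝒰 → ∃ E : Set Y, IsOpen E ∧ Subtype.val ⁻¹' E = U := by
      intro U hU
      obtain ⟨E, hEo, hEU⟩ := isOpen_induced_iff.1 (hUo U hU)
      exact ⟨E, hEo, hEU⟩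
    choose! eF heFo heFp using hext
    set 𝒰' : Set (Set Y) := insert Rᶜ (eF '' 𝒰) with h𝒰'
    obtain ⟨𝒱', hV'o, hV'c, hV'r, hV'm⟩ := h 𝒰'
      (by
        rintro U' (rfl | ⟨U, hU, rfl⟩)
        · exact hR.isOpen_compl
        · exact heFo U hU)
      (by
        apply Set.eq_univ_of_forall
        intro y
        by_cases hy : y ∈ R
        · have : (⟨y, hy⟩ : R) ∈ ⋃₀ 𝒰 := hUc ▸ mem_univ _
          obtain ⟨U, hU, hyU⟩ := this
          have : (⟨y, hy⟩ : R) ∈ Subtype.val ⁻¹' eF U := (heFp U hU).symm ▸ hyU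
          exact ⟨eF U, Or.inr ⟨U, hU, rfl⟩, this⟩
        · exact ⟨Rᶜ, Or.inl rfl, hy⟩)
    refine ⟨(fun V' => (Subtype.val ⁻¹' V' : Set R)) '' 𝒱', ?_, ?_, ?_, ?_⟩
    · rintro V ⟨V', hV', rfl⟩
      exact (hV'o V' hV').preimage continuous_subtype_val
    · apply Set.eq_univ_of_forall
      intro x
      have : (x : Y) ∈ ⋃₀ 𝒱' := hV'c ▸ mem_univ _
      obtain ⟨V', hV', hxV'⟩ := this
      exact ⟨Subtype.val ⁻¹' V', ⟨V', hV', rfl⟩, hxV'⟩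
    · rintro V ⟨V', hV', rfl⟩
      obtain ⟨U', hU', hVU'⟩ := hV'r V' hV'
      rcases hU' with rfl | ⟨U, hU, rfl⟩
      · refine ⟨U₀, hU₀, ?_⟩
        intro x hx
        exact absurd x.2 (hVU' hx)
      · exact ⟨U, hU, fun x hx => (heFp U hU) ▸ (hVU' hx : (x : Y) ∈ eF U)⟩
    · intro x
      have hsub : {V ∈ (fun V' => (Subtype.val ⁻¹' V' : Set R)) '' 𝒱' | x ∈ V} ⊆
          (fun V' => (Subtype.val ⁻¹' V' : Set R)) '' {V' ∈ 𝒱' | (x : Y) ∈ V'} := by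
        rintro V ⟨⟨V', hV', rfl⟩, hxV⟩
        exact ⟨V', ⟨hV', hxV⟩, rfl⟩
      calc {V ∈ (fun V' => (Subtype.val ⁻¹' V' : Set R)) '' 𝒱' | x ∈ V}.encard
          ≤ ((fun V' => (Subtype.val ⁻¹' V' : Set R)) '' {V' ∈ 𝒱' | (x : Y) ∈ V'}).encard :=
            Set.encard_mono hsub
        _ ≤ {V' ∈ 𝒱' | (x : Y) ∈ V'}.encard := Set.encard_image_le _ _
        _ ≤ (n + 1 : ℕ) := hV'm x

lemma aux_covDimLE_of_light {X Y : Type*} [MetricSpace X] [CompactSpace X] [MetricSpace Y]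
    (r : X → Y) (hr : Continuous r)
    (hlight : ∀ y : Y, IsTotallyDisconnected (r ⁻¹' {y}))
    {n : ℕ} (h : covDimLE Y n) : covDimLE X n := by
  classical
  intro 𝒰 hUo hUc
  rcases isEmpty_or_nonempty X with hE | hNe
  · refine ⟨∅, by simp, ?_, by simp, by simp⟩
    rw [Set.sUnion_empty, eq_comm, Set.univ_eq_empty_iff]
    exact hE
  haveI : Nonempty Y := hNe.map r
  -- for each y, disjoint open family covering the fiber
  have hfib : ∀ y : Y, ∃ (m : ℕ) (O : Fin m → Set X), (∀ i, IsOpen (O i)) ∧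
      (∀ i, ∃ U ∈ 𝒰, O i ⊆ U) ∧ (∀ i j : Fin m, i ≠ j → Disjoint (O i) (O j)) ∧
      r ⁻¹' {y} ⊆ ⋃ i, O i := by
    intro y
    exact aux_exists_disjoint_open_family 𝒰 hUo _
      ((isClosed_singleton.preimage hr).isCompact) (hlight y)
      (by rw [hUc]; exact subset_univ _)
  choose m O hOo hOsub hOdisj hOcov using hfib
  -- open neighbourhoods W y with r ⁻¹' (W y) ⊆ ⋃ O y
  set W : Y → Set Y := fun y => (r '' (⋃ i, O y i)ᶜ)ᶜ with hW_def
  have hWo : ∀ y, IsOpen (W y) := fun y =>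
    (hr.isClosedMap _ (isOpen_iUnion (hOo y)).isClosed_compl).isOpen_compl
  have hyW : ∀ y, y ∈ W y := by
    intro y
    rintro ⟨x, hx, rfl⟩
    exact hx (hOcov _ rfl)
  have hWpre : ∀ y, r ⁻¹' (W y) ⊆ ⋃ i, O y i := by
    intro y x hx
    by_contra hxn
    exact hx ⟨x, hxn, rfl⟩
  obtain ⟨𝒱', hV'o, hV'c, hV'r, hV'm⟩ := h (range W)
    (by rintro U' ⟨y, rfl⟩; exact hWo y)
    (Set.eq_univ_of_forall fun y => ⟨W y, mem_range_self y, hyW y⟩)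
  -- assign to each V' a point y with V' ⊆ W y
  set yc : Set Y → Y := fun V' =>
    if hV : ∃ y, V' ⊆ W y then hV.choose else Classical.arbitrary Y with hyc_def
  have hyc : ∀ V' ∈ 𝒱', V' ⊆ W (yc V') := by
    intro V' hV'
    obtain ⟨U', hU', hVU'⟩ := hV'r V' hV'
    obtain ⟨y, rfl⟩ := hU'
    have hV : ∃ y', V' ⊆ W y' := ⟨y, hVU'⟩
    simp only [hyc_def, dif_pos hV]
    exact hV.choose_spec
  set 𝒱 : Set (Set X) :=
    {S | ∃ V' ∈ 𝒱', ∃ i : Fin (m (yc V')), S = O (yc V') i ∩ r ⁻¹' V'} with h𝒱_def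
  refine ⟨𝒱, ?_, ?_, ?_, ?_⟩
  · rintro V ⟨V', hV', i, rfl⟩
    exact (hOo _ i).inter ((hV'o V' hV').preimage hr)
  · apply Set.eq_univ_of_forall
    intro x
    have : r x ∈ ⋃₀ 𝒱' := hV'c ▸ mem_univ _
    obtain ⟨V', hV', hxV'⟩ := this
    have hxO : x ∈ ⋃ i, O (yc V') i := hWpre _ (hyc V' hV' hxV')
    obtain ⟨i, hi⟩ := mem_iUnion.1 hxO
    exact ⟨O (yc V') i ∩ r ⁻¹' V', ⟨V', hV', i, rfl⟩, hi, hxV'⟩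
  · rintro V ⟨V', hV', i, rfl⟩
    obtain ⟨U, hU, hOU⟩ := hOsub (yc V') i
    exact ⟨U, hU, inter_subset_left.trans hOU⟩
  · intro x
    set Φ : Set Y → Set X := fun V' =>
      (⋃ i ∈ {i : Fin (m (yc V')) | x ∈ O (yc V') i}, O (yc V') i) ∩ r ⁻¹' V' with hΦ_def
    have hsub : {V ∈ 𝒱 | x ∈ V} ⊆ Φ '' {V' ∈ 𝒱' | r x ∈ V'} := by
      rintro V ⟨⟨V', hV', i, rfl⟩, hxO, hxV'⟩
      refine ⟨V', ⟨hV', hxV'⟩, ?_⟩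
      have hset : {j : Fin (m (yc V')) | x ∈ O (yc V') j} = {i} := by
        apply Set.eq_singleton_iff_unique_mem.2
        refine ⟨hxO, fun j hj => ?_⟩
        by_contra hji
        exact (hOdisj (yc V') j i hji).le_bot ⟨hj, hxO⟩
      simp only [hΦ_def, hset, Set.biUnion_singleton]
    calc {V ∈ 𝒱 | x ∈ V}.encard ≤ (Φ '' {V' ∈ 𝒱' | r x ∈ V'}).encard := Set.encard_mono hsub
      _ ≤ {V' ∈ 𝒱' | r x ∈ V'}.encard := Set.encard_image_le _ _
      _ ≤ (n + 1 : ℕ) := hV'm (r x)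

/-- A light continuous map from a compact metric space to a separable metric space
does not decrease topological dimension: `dim X ≤ dim Im(f) ≤ dim Y`. -/
theorem light_map_does_not_decrease_dimension {X Y : Type*} [MetricSpace X]
    [CompactSpace X] [MetricSpace Y] [TopologicalSpace.SeparableSpace Y]
    (f : X → Y) (hf : Continuous f)
    (hlight : ∀ y : Y, IsTotallyDisconnected (f ⁻¹' {y})) :
    topDim X ≤ topDim ↥(range f) ∧ topDim ↥(range f) ≤ topDim Y := by
  have hRc : IsCompact (range f) := isCompact_range hf
  haveI : CompactSpace ↥(range f) := isCompact_iff_compactSpace.1 hRc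
  set r : X → ↥(range f) := fun x => ⟨f x, mem_range_self x⟩ with hr_def
  have hrc : Continuous r := hf.subtype_mk _
  have hrl : ∀ y : ↥(range f), IsTotallyDisconnected (r ⁻¹' {y}) := by
    intro y
    have hpre : r ⁻¹' {y} = f ⁻¹' {(y : Y)} := by
      ext x; simp [hr_def, Subtype.ext_iff]
    rw [hpre]; exact hlight _
  constructor
  · exact le_iInf₂ fun n hn => iInf₂_le n (aux_covDimLE_of_light r hrc hrl hn)
  · exact le_iInf₂ fun n hn => iInf₂_le n (aux_covDimLE_subset hRc.isClosed hn)
end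
end

section
/- Let Z be a uniformly perfect compact metric space and G ↷ Z an η-quasi-Möbius action by homeomorphisms. Suppose for each k ∈ ℕ we are given: a ball B_k = B(p_k, R_k) ⊆ Z and a subset D_k ⊆ B_k that is (ε_k R_k)-dense in B_k (ε_k > 0); pairwise distinct points x¹_k, x²_k, x³_k ∈ B(p_k, λ_k R_k) (λ_k > 0) with d(xⁱ_k, xʲ_k) > δ_k R_k for i ≠ j (δ_k > 0); and group elements g_k ∈ G such that the images yⁱ_k := g_k(xⁱ_k) satisfy d(yⁱ_k, yʲ_k) > δ' for i ≠ j, where δ' > 0 is independent of k. If λ_k → 0 as k → ∞ and the sequence (ε_k/δ_k²) is bounded, then the Hausdorff distance dist_H(g_k(D_k), Z) → 0 as k → ∞. -/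
open Metric Set MeasureTheory Filter Topology

noncomputable section

/-!
A quasi-Möbius map `f` satisfies `d(f w, f v) ≤ η([w, a, v, b]) · diam² / d(f a, f b)`, and the
images of the triple are `δ'`-separated. Of the three points `x_k^i`, two are `δ_k R_k / 2`-far
from any given `w`; with these as `a, b`, a point `w` of the ball `B_k` and a point `v ∈ D_k`
within `ε_k R_k` of it have cross-ratio `≲ ε_k λ_k / δ_k² ≲ λ_k`. A point `w` outside `B_k` is
compared with a point `w₀` at distance `≍ R_k` from `p_k`, supplied by uniform perfectness, and
again `[w, x_k^1, w₀, x_k^2] ≲ λ_k`. As `η(t) → 0` when `t → 0`, every point of `Z = g_k(Z)` is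
eventually uniformly close to `g_k(D_k)`.
-/

open scoped NNReal

theorem NNReal.strictMono_of_homeomorph (η : ℝ≥0 ≃ₜ ℝ≥0) : StrictMono η := by
  refine (η.continuous.strictMono_of_inj η.injective).resolve_right fun hanti => ?_
  have h := hanti.antitone (zero_le : 0 ≤ η.symm (η 0 + 1))
  rw [η.apply_symm_apply] at h
  exact (lt_add_one (η 0)).not_ge h

theorem NNReal.homeomorph_map_zero (η : ℝ≥0 ≃ₜ ℝ≥0) : η 0 = 0 :=
  nonpos_iff_eq_zero.mp <| by
    simpa using (NNReal.strictMono_of_homeomorph η).monotone (zero_le : 0 ≤ η.symm 0)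

section

variable {X Y : Type*} [MetricSpace X] [MetricSpace Y] {η : ℝ≥0 ≃ₜ ℝ≥0} {f : X → Y}
  {d δ' τ : ℝ} {p : X} {R lam : ℝ}

theorem crossRatio_le {z₁ z₂ z₃ z₄ : X} {a b c d : ℝ} (h₁₃ : dist z₁ z₃ ≤ a)
    (h₂₄ : dist z₂ z₄ ≤ b) (hc : 0 < c) (hd : 0 < d) (h₁₄ : c ≤ dist z₁ z₄)
    (h₂₃ : d ≤ dist z₂ z₃) : (crossRatio z₁ z₂ z₃ z₄ : ℝ) ≤ a * b / (c * d) := by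
  simp only [crossRatio, NNReal.coe_div, NNReal.coe_mul, coe_nndist]
  exact div_le_div₀ (mul_nonneg (dist_nonneg.trans h₁₃) (dist_nonneg.trans h₂₄))
    (mul_le_mul h₁₃ h₂₄ dist_nonneg (dist_nonneg.trans h₁₃)) (mul_pos hc hd)
    (mul_le_mul h₁₄ h₂₃ hd.le (hc.le.trans h₁₄))

theorem IsQuasiMobius.dist_le (hf : IsQuasiMobius η f)
    {t : ℝ} (hd : ∀ a b, dist (f a) (f b) ≤ d) (hδ' : 0 < δ') {z₁ z₂ z₃ z₄ : X}
    (h₁₂ : z₁ ≠ z₂) (h₁₃ : z₁ ≠ z₃) (h₁₄ : z₁ ≠ z₄) (h₂₃ : z₂ ≠ z₃) (h₂₄ : z₂ ≠ z₄)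
    (h₃₄ : z₃ ≠ z₄) (hsep : δ' ≤ dist (f z₂) (f z₄))
    (ht : (crossRatio z₁ z₂ z₃ z₄ : ℝ) ≤ t) :
    dist (f z₁) (f z₃) ≤ η t.toNNReal * d ^ 2 / δ' := by
  have hcr : η (crossRatio z₁ z₂ z₃ z₄) ≤ η t.toNNReal :=
    (NNReal.strictMono_of_homeomorph η).monotone (by simpa using Real.toNNReal_le_toNNReal ht)
  have hqm := (hf.2 z₁ z₂ z₃ z₄ h₁₂ h₁₃ h₁₄ h₂₃ h₂₄ h₃₄).trans hcr
  have hpos : 0 < nndist (f z₁) (f z₄) * nndist (f z₂) (f z₃) :=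
    mul_pos (pos_iff_ne_zero.mpr (mt nndist_eq_zero.mp (hf.1.ne h₁₄)))
      (pos_iff_ne_zero.mpr (mt nndist_eq_zero.mp (hf.1.ne h₂₃)))
  rw [crossRatio, div_le_iff₀ hpos, ← NNReal.coe_le_coe] at hqm
  simp only [NNReal.coe_mul, coe_nndist] at hqm
  rw [le_div_iff₀ hδ']
  have hη : (0 : ℝ) ≤ η t.toNNReal := NNReal.coe_nonneg _
  calc dist (f z₁) (f z₃) * δ' ≤ dist (f z₁) (f z₃) * dist (f z₂) (f z₄) := by gcongr
    _ ≤ η t.toNNReal * (dist (f z₁) (f z₄) * dist (f z₂) (f z₃)) := hqm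
    _ ≤ η t.toNNReal * d ^ 2 := by
      rw [sq]
      exact mul_le_mul_of_nonneg_left
        (mul_le_mul (hd _ _) (hd _ _) dist_nonneg (dist_nonneg.trans (hd z₁ z₁))) hη

theorem exists_pair_half_le_dist (x : Fin 3 → X) (w : X) {s : ℝ}
    (hsep : ∀ i j, i ≠ j → s < dist (x i) (x j)) :
    ∃ a b, a ≠ b ∧ s / 2 ≤ dist w (x a) ∧ s / 2 ≤ dist w (x b) := by
  by_cases h : ∃ i, dist w (x i) < s / 2
  · obtain ⟨i, hi⟩ := h
    have far : ∀ j, j ≠ i → s / 2 ≤ dist w (x j) := fun j hj => by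
      linarith [hsep i j hj.symm, dist_triangle_left (x i) (x j) w]
    have hne : i + 1 ≠ i + 2 ∧ i + 1 ≠ i ∧ i + 2 ≠ i := by
      clear far hi; revert i; decide
    exact ⟨i + 1, i + 2, hne.1, far _ hne.2.1, far _ hne.2.2⟩
  · simp only [not_exists, not_lt] at h
    exact ⟨0, 1, by decide, h 0, h 1⟩

theorem IsQuasiMobius.dist_le_of_dist_le_mul (hf : IsQuasiMobius η f)
    (hd : ∀ a b, dist (f a) (f b) ≤ d) (hδ' : 0 < δ') {δ ε : ℝ} (hR : 0 < R) (hδ : 0 < δ)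
    {x : Fin 3 → X} (hxball : ∀ i, x i ∈ ball p (lam * R))
    (hxsep : ∀ i j, i ≠ j → δ * R < dist (x i) (x j))
    (hfx : ∀ i j, i ≠ j → δ' ≤ dist (f (x i)) (f (x j))) (hεδ : 4 * ε ≤ δ)
    (hτ : 16 * ε * lam / δ ^ 2 ≤ τ) {w v : X} (hwv : dist w v ≤ ε * R) :
    dist (f w) (f v) ≤ η τ.toNNReal * d ^ 2 / δ' := by
  rcases eq_or_ne w v with rfl | hwv'
  · rw [dist_self]; positivity
  obtain ⟨a, b, hab, ha, hb⟩ := exists_pair_half_le_dist x w hxsep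
  have hδR : 0 < δ * R := mul_pos hδ hR
  have hεR : ε * R ≤ δ * R / 4 := by nlinarith
  have hav : δ * R / 4 ≤ dist (x a) v := by linarith [dist_triangle_right w (x a) v]
  have hbv : δ * R / 4 ≤ dist (x b) v := by linarith [dist_triangle_right w (x b) v]
  have hxab : dist (x a) (x b) ≤ 2 * lam * R := by
    linarith [dist_triangle_right (x a) (x b) p, mem_ball.mp (hxball a), mem_ball.mp (hxball b)]
  have hcr := crossRatio_le hwv hxab (by positivity) (by positivity) hb hav
  refine hf.dist_le hd hδ' (dist_pos.mp (by linarith)) hwv' (dist_pos.mp (by linarith))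
    (dist_pos.mp (by linarith)) (dist_pos.mp (hδR.trans (hxsep a b hab)))
    (dist_pos.mp (by linarith)).symm
    (hfx a b hab) (hcr.trans (le_of_eq_of_le ?_ hτ))
  field_simp
  ring

theorem IsQuasiMobius.dist_le_of_le_dist (hf : IsQuasiMobius η f)
    (hd : ∀ a b, dist (f a) (f b) ≤ d) (hδ' : 0 < δ') {L : ℝ} (hR : 0 < R) (hL : 1 ≤ L)
    (hlam : 4 * L * lam ≤ 1) (hτ : 24 * L * lam ≤ τ) {a b : X} (ha : a ∈ ball p (lam * R))
    (hb : b ∈ ball p (lam * R)) (hab : a ≠ b) (hfab : δ' ≤ dist (f a) (f b)) {w w₀ : X}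
    (hw : R ≤ dist w p) (hw₀ : w₀ ∈ closedBall p (R / 2) \ ball p (R / 2 / L)) :
    dist (f w) (f w₀) ≤ η τ.toNNReal * d ^ 2 / δ' := by
  set r := dist w p
  have hL0 : 0 < L := by linarith
  have hr : 0 < r := by linarith
  have hρ : 0 < R / (4 * L) := by positivity
  have ha' := mem_ball.mp ha
  have hb' := mem_ball.mp hb
  have hw₀p : dist w₀ p ≤ R / 2 := mem_closedBall.mp hw₀.1
  have hw₀p' : 2 * (R / (4 * L)) ≤ dist w₀ p := by
    have := not_lt.mp (mt mem_ball.mpr hw₀.2)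
    linarith [show R / 2 / L = 2 * (R / (4 * L)) by ring]
  have hlamR : lam * R ≤ R / (4 * L) := by
    rw [le_div_iff₀ (by positivity)]; nlinarith
  have hlamR' : lam * R ≤ r / 4 := by
    linarith [div_le_div_of_nonneg_left hR.le (by norm_num) (by linarith : 4 ≤ 4 * L)]
  have hww₀ : dist w w₀ ≤ 3 / 2 * r := by linarith [dist_triangle_right w w₀ p]
  have hab' : dist a b ≤ 2 * lam * R := by linarith [dist_triangle_right a b p]
  have hwb : r / 2 ≤ dist w b := by linarith [dist_triangle w b p]
  have haw₀ : R / (4 * L) ≤ dist a w₀ := by linarith [dist_triangle_left w₀ p a]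
  have hcr := crossRatio_le hww₀ hab' (by positivity) hρ hwb haw₀
  refine hf.dist_le hd hδ' ?_ ?_ ?_ ?_ hab ?_ hfab (hcr.trans (le_of_eq_of_le ?_ hτ))
  · exact dist_pos.mp (by linarith [dist_triangle w a p])
  · exact dist_pos.mp (by linarith [dist_triangle w w₀ p])
  · exact dist_pos.mp (by linarith)
  · exact dist_pos.mp (by linarith)
  · exact (dist_pos.mp (by linarith [dist_triangle_left w₀ p b])).symm
  · field_simp
    ring

theorem lt_two_mul_of_mul_lt_dist {δ : ℝ} (hR : 0 < R) {a b : X} (ha : a ∈ ball p (lam * R))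
    (hb : b ∈ ball p (lam * R)) (hab : δ * R < dist a b) : δ < 2 * lam := by
  have := dist_triangle_right a b p
  rw [mem_ball] at ha hb
  nlinarith

theorem IsQuasiMobius.hausdorffDist_image_univ_le [BoundedSpace X] (hf : IsQuasiMobius η f)
    (hsurj : Function.Surjective f) (hd : ∀ a b, dist (f a) (f b) ≤ d) (hδ' : 0 < δ') {L : ℝ}
    (hL : 1 ≤ L) (hUP : ∀ (z : X) (r : ℝ), 0 < r → r ≤ diam (univ : Set X) →
      (closedBall z r \ ball z (r / L)).Nonempty)
    {δ ε : ℝ} (hR : 0 < R) (hδ : 0 < δ) {x : Fin 3 → X} (hxball : ∀ i, x i ∈ ball p (lam * R))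
    (hxsep : ∀ i j, i ≠ j → δ * R < dist (x i) (x j))
    (hfx : ∀ i j, i ≠ j → δ' ≤ dist (f (x i)) (f (x j))) (hεδ : 4 * ε ≤ δ)
    (hlam : 4 * L * lam ≤ 1) (hτ₁ : 16 * ε * lam / δ ^ 2 ≤ τ) (hτ₂ : 24 * L * lam ≤ τ)
    {D : Set X} (hD : ∀ z ∈ ball p R, ∃ v ∈ D, dist z v ≤ ε * R) :
    hausdorffDist (f '' D) univ ≤ 2 * (η τ.toNNReal * d ^ 2 / δ') := by
  have near : ∀ z ∈ ball p R, ∃ y ∈ f '' D, dist (f z) y ≤ η τ.toNNReal * d ^ 2 / δ' := by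
    intro z hz
    obtain ⟨v, hv, hzv⟩ := hD z hz
    exact ⟨f v, mem_image_of_mem f hv,
      hf.dist_le_of_dist_le_mul hd hδ' hR hδ hxball hxsep hfx hεδ hτ₁ hzv⟩
  have hbound : 0 ≤ η τ.toNNReal * d ^ 2 / δ' := by positivity
  refine hausdorffDist_le_of_mem_dist (by positivity)
    (fun y _ => ⟨y, mem_univ y, by rw [dist_self]; positivity⟩) ?_
  rintro u -
  obtain ⟨w, rfl⟩ := hsurj u
  by_cases hw : w ∈ ball p R
  · obtain ⟨y, hy, hwy⟩ := near w hw
    exact ⟨y, hy, by linarith⟩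
  have hRw : R ≤ dist w p := not_lt.mp (mt mem_ball.mpr hw)
  obtain ⟨w₀, hw₀⟩ := hUP p (R / 2) (by positivity)
    (by linarith [dist_le_diam_of_mem BoundedSpace.bounded_univ (mem_univ w) (mem_univ p)])
  obtain ⟨y, hy, hw₀y⟩ := near w₀ (closedBall_subset_ball (by linarith) hw₀.1)
  have hab : (0 : Fin 3) ≠ 1 := by decide
  have hww₀ := hf.dist_le_of_le_dist hd hδ' hR hL hlam hτ₂ (hxball 0) (hxball 1)
    (dist_pos.mp ((mul_pos hδ hR).trans (hxsep 0 1 hab))) (hfx 0 1 hab) hRw hw₀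
  exact ⟨y, hy, by linarith [dist_triangle (f w) (f w₀) y]⟩

end

theorem images_of_dense_sets_fill_in_general {Z : Type*} [MetricSpace Z] [CompactSpace Z]
    (hup : UniformlyPerfect Z)
    {G : Type*} [Group G] [MulAction G Z] (η : NNReal ≃ₜ NNReal)
    (hqm : ∀ g : G, IsQuasiMobius η (fun z : Z => g • z))
    (p : ℕ → Z) (R : ℕ → ℝ) (hR : ∀ k, 0 < R k)
    (ε δ lam : ℕ → ℝ) (hδ : ∀ k, 0 < δ k)
    (D : ℕ → Set Z)
    (hDdense : ∀ k, ∀ z ∈ Metric.ball (p k) (R k), ∃ w ∈ D k, dist z w ≤ ε k * R k)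
    (x : ℕ → Fin 3 → Z)
    (hxball : ∀ k i, x k i ∈ Metric.ball (p k) (lam k * R k))
    (hxsep : ∀ k, ∀ i j : Fin 3, i ≠ j → δ k * R k < dist (x k i) (x k j))
    (g : ℕ → G) (δ' : ℝ) (hδ' : 0 < δ')
    (hgsep : ∀ k, ∀ i j : Fin 3, i ≠ j → δ' < dist (g k • x k i) (g k • x k j))
    (hlam0 : Tendsto lam atTop (nhds 0))
    (hbdd : ∃ C : ℝ, ∀ k, ε k / (δ k) ^ 2 ≤ C) :
    Tendsto (fun k => hausdorffDist ((fun z => g k • z) '' D k) (univ : Set Z))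
      atTop (nhds 0) := by
  obtain ⟨L, hL, hUP⟩ := hup
  obtain ⟨C₀, hC₀⟩ := hbdd
  set C := max C₀ 0
  set M := 16 * C + 24 * L
  set d := diam (univ : Set Z)
  have hd (a b : Z) : dist a b ≤ d :=
    dist_le_diam_of_mem isCompact_univ.isBounded (mem_univ a) (mem_univ b)
  have hδlam k : δ k < 2 * lam k :=
    lt_two_mul_of_mul_lt_dist (hR k) (hxball k 0) (hxball k 1) (hxsep k 0 1 (by decide))
  have hεC k : ε k ≤ C * δ k ^ 2 :=
    (div_le_iff₀ (pow_pos (hδ k) 2)).mp ((hC₀ k).trans (le_max_left _ _))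
  have hsmall : ∀ᶠ k in atTop, 8 * C * lam k ≤ 1 ∧ 4 * L * lam k ≤ 1 := by
    have h (c : ℝ) : ∀ᶠ k in atTop, c * lam k ≤ 1 := by
      have hc := hlam0.const_mul c
      rw [mul_zero] at hc
      exact hc.eventually_le_const one_pos
    exact (h _).and (h _)
  have hbound : ∀ᶠ k in atTop, hausdorffDist ((fun z => g k • z) '' D k) univ ≤
      2 * (η (M * lam k).toNNReal * d ^ 2 / δ') := by
    filter_upwards [hsmall] with k ⟨hC8, hL4⟩
    have hlamk : 0 < lam k := by linarith [hδlam k, hδ k]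
    refine (hqm (g k)).hausdorffDist_image_univ_le (MulAction.surjective (g k)) (fun _ _ => hd _ _)
      hδ' hL hUP (hR k) (hδ k) (hxball k) (hxsep k) (fun i j hij => (hgsep k i j hij).le) ?_ hL4
      ?_ ?_ (hDdense k)
    · nlinarith [hεC k, hδlam k, hδ k, le_max_right C₀ 0]
    · rw [div_le_iff₀ (pow_pos (hδ k) 2)]
      nlinarith [mul_le_mul_of_nonneg_left (hεC k) hlamk.le, mul_pos hlamk (pow_pos (hδ k) 2)]
    · nlinarith [le_max_right C₀ 0]
  have hlim : Tendsto (fun k => 2 * (η (M * lam k).toNNReal * d ^ 2 / δ')) atTop (𝓝 0) := by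
    have hη : Tendsto (fun k => η (M * lam k).toNNReal) atTop (𝓝 0) := by
      rw [← NNReal.homeomorph_map_zero η]
      refine η.continuous.continuousAt.tendsto.comp ?_
      exact (continuous_real_toNNReal.tendsto' 0 0 Real.toNNReal_zero).comp
        (by simpa using hlam0.const_mul M)
    have hηℝ := (NNReal.continuous_coe.tendsto 0).comp hη
    simpa using ((hηℝ.mul_const (d ^ 2)).div_const δ').const_mul 2
  exact squeeze_zero' (Eventually.of_forall fun _ => hausdorffDist_nonneg) hbound hlim

/-- **Bonk–Kleiner, Lemma 5.1 (i).** Blowing up triples deep inside balls of a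
uniformly perfect compact space by an `η`-quasi-Möbius action spreads dense subsets
of the balls to sets Hausdorff-close to the whole space. -/
theorem images_of_dense_sets_fill_in {Z : Type*} [MetricSpace Z] [CompactSpace Z]
    (hup : UniformlyPerfect Z)
    {G : Type*} [Group G] [MulAction G Z] (η : NNReal ≃ₜ NNReal)
    (hcont : ∀ g : G, Continuous fun z : Z => g • z)
    (hqm : ∀ g : G, IsQuasiMobius η (fun z : Z => g • z))
    (p : ℕ → Z) (R : ℕ → ℝ) (hR : ∀ k, 0 < R k)
    (ε δ lam : ℕ → ℝ) (hε : ∀ k, 0 < ε k) (hδ : ∀ k, 0 < δ k) (hlam : ∀ k, 0 < lam k)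
    (D : ℕ → Set Z) (hD : ∀ k, D k ⊆ Metric.ball (p k) (R k))
    (hDdense : ∀ k, ∀ z ∈ Metric.ball (p k) (R k), ∃ w ∈ D k, dist z w ≤ ε k * R k)
    (x : ℕ → Fin 3 → Z)
    (hxball : ∀ k i, x k i ∈ Metric.ball (p k) (lam k * R k))
    (hxdist : ∀ k, ∀ i j : Fin 3, i ≠ j → x k i ≠ x k j)
    (hxsep : ∀ k, ∀ i j : Fin 3, i ≠ j → δ k * R k < dist (x k i) (x k j))
    (g : ℕ → G) (δ' : ℝ) (hδ' : 0 < δ')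
    (hgsep : ∀ k, ∀ i j : Fin 3, i ≠ j → δ' < dist (g k • x k i) (g k • x k j))
    (hlam0 : Tendsto lam atTop (nhds 0))
    (hbdd : ∃ C : ℝ, ∀ k, ε k / (δ k) ^ 2 ≤ C) :
    Tendsto (fun k => hausdorffDist ((fun z => g k • z) '' D k) (univ : Set Z))
      atTop (nhds 0) :=
  images_of_dense_sets_fill_in_general hup η hqm p R hR ε δ lam hδ D hDdense x hxball hxsep g δ' hδ'
    hgsep hlam0 hbdd

end
end
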